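/- arXiv:1010.3889 — 6 statements merged into one kernel-verified Lean document; each statement's English description precedes it below -/
import Mathlib

section
/- For every integer n ≥ 0 and every integer x₀, the fermionic p-adic q-integral of y ↦ [x₀+y]_q^n exists and equals ξ_{n,q}(x₀); that is, the sequence N ↦ (1/[p^N]_{−q})·Σ_{y=0}^{p^N−1} [x₀+y]_q^n·(−q)^y converges in ℚ_p to ξ_{n,q}(x₀). Moreover ξ_{n,q}(x₀) = Σ_{l=0}^{n} C(n,l)·[x₀]_q^{n−l}·q^{l·x₀}·ξ_{l,q}. -/
open Finset Filter

/-- `[a]_q = (1 - q^a)/(1 - q)` for `a : ℤ`. -/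
noncomputable def qnum {p : ℕ} [Fact p.Prime] (q : ℚ_[p]) (a : ℤ) : ℚ_[p] :=
  (1 - q ^ a) / (1 - q)

/-- Kim's q-Euler polynomial `ξ_{n,q}(x)` (closed form). -/
noncomputable def xi {p : ℕ} [Fact p.Prime] (q : ℚ_[p]) (n : ℕ) (x : ℤ) : ℚ_[p] :=
  ((1 + q) / (1 - q) ^ n) *
    ∑ l ∈ Finset.range (n + 1),
      (n.choose l : ℚ_[p]) * (-1) ^ l * q ^ ((l : ℤ) * x) / (1 + q ^ (l + 1))

/-- The fermionic p-adic `r`-integral statement: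
`∫_{ℤ_p} g dμ_{-r} = L` means the Riemann-type sums
`(1/[p^N]_{-r}) · Σ_{x=0}^{p^N-1} g(x) (-r)^x` converge to `L`. -/
def fermionicIntegral (p : ℕ) [Fact p.Prime] (r : ℚ_[p]) (g : ℕ → ℚ_[p]) (L : ℚ_[p]) : Prop :=
  Filter.Tendsto
    (fun N : ℕ => ((1 + r) / (1 - (-r) ^ (p ^ N))) * ∑ x ∈ Finset.range (p ^ N), g x * (-r) ^ x)
    Filter.atTop (nhds L)

/-- The q-Bernstein polynomial `B_{k,n}(x,q) = C(n,k) [x]_q^k [1-x]_{1/q}^{n-k}`. -/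
noncomputable def bern {p : ℕ} [Fact p.Prime] (q : ℚ_[p]) (k n : ℕ) (x : ℤ) : ℚ_[p] :=
  (n.choose k : ℚ_[p]) * (qnum q x) ^ k * (qnum q⁻¹ (1 - x)) ^ (n - k)

section helpers
open IsUltrametricDist
variable {p : ℕ} [hpp : Fact p.Prime] {q : ℚ_[p]}

lemma norm_q_eq_one (hq : ‖1 - q‖ < 1) : ‖q‖ = 1 := by
  have h1 : ‖-(1 - q)‖ ≠ ‖(1 : ℚ_[p])‖ := by
    rw [norm_neg, norm_one]; exact hq.ne
  have := norm_add_eq_max_of_norm_ne_norm h1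
  have h2 : -(1 - q) + 1 = q := by ring
  rw [h2, norm_neg, norm_one] at this
  rw [this, max_eq_right hq.le]

lemma q_ne_zero (hq : ‖1 - q‖ < 1) : q ≠ 0 := by
  intro h
  have := norm_q_eq_one hq
  rw [h, norm_zero] at this; norm_num at this

lemma norm_pow_sub_one_le {r : ℚ_[p]} (hr : ‖r‖ ≤ 1) (k : ℕ) : ‖r ^ k - 1‖ ≤ ‖r - 1‖ := by
  rw [← geom_sum_mul, norm_mul]
  calc ‖∑ i ∈ range k, r ^ i‖ * ‖r - 1‖ ≤ 1 * ‖r - 1‖ := by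
        apply mul_le_mul_of_nonneg_right _ (norm_nonneg _)
        exact norm_sum_le_of_forall_le_of_nonneg zero_le_one
          (fun i _ => by rw [norm_pow]; exact pow_le_one₀ (norm_nonneg _) hr)
    _ = ‖r - 1‖ := one_mul _

lemma key_step {r : ℚ_[p]} (hr : ‖r‖ ≤ 1) :
    ‖r ^ p - 1‖ ≤ max ‖(p : ℚ_[p])‖ ‖r - 1‖ * ‖r - 1‖ := by
  rw [← geom_sum_mul, norm_mul]
  apply mul_le_mul_of_nonneg_right _ (norm_nonneg _)
  have hdecomp : ∑ i ∈ range p, r ^ i = (∑ i ∈ range p, (r ^ i - 1)) + (p : ℚ_[p]) := by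
    rw [Finset.sum_sub_distrib]
    simp [Finset.sum_const, Finset.card_range]
  rw [hdecomp]
  refine le_trans (norm_add_le_max _ _) ?_
  rw [max_le_iff]
  constructor
  · refine le_trans (norm_sum_le_of_forall_le_of_nonneg (norm_nonneg (r - 1))
      (fun i _ => norm_pow_sub_one_le hr i)) (le_max_right _ _)
  · exact le_max_left _ _

lemma tendsto_q_pow_pow (hq : ‖1 - q‖ < 1) :
    Tendsto (fun N : ℕ => q ^ p ^ N) atTop (nhds 1) := by
  set c := max ‖(p : ℚ_[p])‖ ‖1 - q‖ with hc
  have hc0 : 0 ≤ c := le_trans (norm_nonneg _) (le_max_left _ _)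
  have hc1 : c < 1 := max_lt Padic.norm_p_lt_one hq
  have hq1 : ‖q‖ ≤ 1 := (norm_q_eq_one hq).le
  have bound : ∀ N : ℕ, ‖q ^ p ^ N - 1‖ ≤ ‖1 - q‖ * c ^ N := by
    intro N
    induction N with
    | zero => simp [norm_sub_rev]
    | succ N ih =>
      have hsplit : q ^ p ^ (N + 1) = (q ^ p ^ N) ^ p := by
        rw [← pow_mul, pow_succ]
      have hrnorm : ‖q ^ p ^ N‖ ≤ 1 := by
        rw [norm_pow]; exact pow_le_one₀ (norm_nonneg _) hq1
      have hle : ‖q ^ p ^ N - 1‖ ≤ ‖1 - q‖ := by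
        refine ih.trans ?_
        calc ‖1 - q‖ * c ^ N ≤ ‖1 - q‖ * 1 :=
              mul_le_mul_of_nonneg_left (pow_le_one₀ hc0 hc1.le) (norm_nonneg _)
          _ = ‖1 - q‖ := mul_one _
      calc ‖q ^ p ^ (N + 1) - 1‖ = ‖(q ^ p ^ N) ^ p - 1‖ := by rw [hsplit]
        _ ≤ max ‖(p : ℚ_[p])‖ ‖q ^ p ^ N - 1‖ * ‖q ^ p ^ N - 1‖ := key_step hrnorm
        _ ≤ c * (‖1 - q‖ * c ^ N) := by
            refine mul_le_mul ?_ ih (norm_nonneg _) hc0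
            exact max_le (le_max_left _ _) (hle.trans (le_max_right _ _))
        _ = ‖1 - q‖ * c ^ (N + 1) := by ring
  rw [tendsto_iff_norm_sub_tendsto_zero]
  refine squeeze_zero (fun N => norm_nonneg _) bound ?_
  simpa using (tendsto_pow_atTop_nhds_zero_of_lt_one hc0 hc1).const_mul ‖1 - q‖

lemma norm_two_eq_one (hp : Odd p) : ‖(2 : ℚ_[p])‖ = 1 := by
  have h2 : ((2 : ℤ) : ℚ_[p]) = 2 := by norm_num
  have hle : ‖(2 : ℚ_[p])‖ ≤ 1 := by rw [← h2]; exact Padic.norm_int_le_one _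
  rcases lt_or_eq_of_le hle with h | h
  · exfalso
    rw [← h2, Padic.norm_intCast_lt_one_iff] at h
    have hd : p ∣ 2 := by exact_mod_cast h
    have := (Nat.prime_dvd_prime_iff_eq hpp.out Nat.prime_two).mp hd
    rw [this] at hp
    exact absurd hp (by decide)
  · exact h

lemma one_add_pow_norm (hp : Odd p) (hq : ‖1 - q‖ < 1) (k : ℕ) :
    ‖1 + q ^ k‖ = 1 := by
  have hqk : ‖q ^ k - 1‖ < 1 := lt_of_le_of_lt (by
    simpa [norm_sub_rev] using norm_pow_sub_one_le (norm_q_eq_one hq).le k) hq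
  have hne : ‖(2 : ℚ_[p])‖ ≠ ‖q ^ k - 1‖ := by
    rw [norm_two_eq_one hp]; exact fun h => absurd h.symm hqk.ne
  have := norm_add_eq_max_of_norm_ne_norm hne
  have h2 : (2 : ℚ_[p]) + (q ^ k - 1) = 1 + q ^ k := by ring
  rw [h2, norm_two_eq_one hp] at this
  rw [this, max_eq_left hqk.le]

lemma one_add_pow_ne_zero (hp : Odd p) (hq : ‖1 - q‖ < 1) (k : ℕ) :
    (1 : ℚ_[p]) + q ^ k ≠ 0 := by
  intro h
  have := one_add_pow_norm hp hq k
  rw [h, norm_zero] at this; norm_num at this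

end helpers

section main
variable {p : ℕ} [hpp : Fact p.Prime] {q : ℚ_[p]}

/-- Auxiliary continuous function whose value at `q ^ p ^ N` is the `N`-th Riemann sum. -/
noncomputable def Faux (q : ℚ_[p]) (n : ℕ) (x₀ : ℤ) (t : ℚ_[p]) : ℚ_[p] :=
  ((1 + q) / (1 + t)) * ∑ l ∈ Finset.range (n + 1),
    (n.choose l : ℚ_[p]) * (-1) ^ l * q ^ ((l : ℤ) * x₀) * (1 + t ^ (l + 1))
      / ((1 - q) ^ n * (1 + q ^ (l + 1)))

lemma Faux_cont (n : ℕ) (x₀ : ℤ) : ContinuousAt (Faux q n x₀) 1 := by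
  apply ContinuousAt.mul
  · exact ContinuousAt.div continuousAt_const
      (by fun_prop) (by norm_num)
  · refine (continuous_finset_sum _ fun l _ => ?_).continuousAt
    exact ((continuous_const.mul (continuous_const.add (continuous_pow (l + 1)))).div_const _)

lemma sum_eq_aux (hq0 : q ≠ 0) (hden : ∀ l : ℕ, (1 : ℚ_[p]) + q ^ (l + 1) ≠ 0)
    (n : ℕ) (x₀ : ℤ) (M : ℕ) (hM : Odd M) :
    ((1 + q) / (1 - (-q) ^ M)) * ∑ x ∈ Finset.range M, (qnum q (x₀ + x)) ^ n * (-q) ^ x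
      = Faux q n x₀ (q ^ M) := by
  have hneg : (-q) ^ M = -(q ^ M) := hM.neg_pow q
  have hsum : ∑ x ∈ Finset.range M, (qnum q (x₀ + x)) ^ n * (-q) ^ x
      = ∑ l ∈ Finset.range (n + 1),
          ((n.choose l : ℚ_[p]) * (-1) ^ l * (q ^ x₀) ^ l / (1 - q) ^ n)
            * ∑ x ∈ Finset.range M, (-(q ^ (l + 1))) ^ x := by
    have perx : ∀ x : ℕ, (qnum q (x₀ + x)) ^ n * (-q) ^ x
        = ∑ l ∈ Finset.range (n + 1),
            ((n.choose l : ℚ_[p]) * (-1) ^ l * (q ^ x₀) ^ l / (1 - q) ^ n)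
              * (-(q ^ (l + 1))) ^ x := by
      intro x
      have hx : q ^ (x₀ + (x : ℤ)) = q ^ x₀ * q ^ (x : ℕ) := by
        rw [zpow_add₀ hq0, zpow_natCast]
      have hbin : (1 - q ^ x₀ * q ^ (x : ℕ)) ^ n
          = ∑ l ∈ Finset.range (n + 1),
              (n.choose l : ℚ_[p]) * (-1) ^ l * (q ^ x₀) ^ l * (q ^ (x : ℕ)) ^ l := by
        rw [show (1 : ℚ_[p]) - q ^ x₀ * q ^ (x : ℕ) = -(q ^ x₀ * q ^ (x : ℕ)) + 1 by ring,
          add_pow]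
        refine Finset.sum_congr rfl fun l _ => ?_
        rw [neg_pow, mul_pow, one_pow]; ring
      rw [qnum, hx, div_pow, hbin, Finset.sum_div, Finset.sum_mul]
      refine Finset.sum_congr rfl fun l _ => ?_
      rw [show -(q ^ (l + 1)) = (-q) * q ^ l from by ring, mul_pow, ← pow_mul q l x,
        mul_comm l x, pow_mul]
      ring
    rw [Finset.sum_congr rfl fun x _ => perx x, Finset.sum_comm]
    exact Finset.sum_congr rfl fun l _ => (Finset.mul_sum _ _ _).symm
  have geo : ∀ l : ℕ, ∑ x ∈ Finset.range M, (-(q ^ (l + 1))) ^ x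
      = (1 + (q ^ M) ^ (l + 1)) / (1 + q ^ (l + 1)) := by
    intro l
    have hr1 : -(q ^ (l + 1)) ≠ 1 := by
      intro h; exact hden l (by linear_combination -h)
    have hrd : -(q ^ (l + 1)) - 1 ≠ 0 := by
      intro h; exact hden l (by linear_combination -h)
    rw [geom_sum_eq hr1]
    have hpow : (-(q ^ (l + 1))) ^ M = -((q ^ M) ^ (l + 1)) := by
      rw [hM.neg_pow, ← pow_mul, mul_comm, pow_mul]
    rw [hpow, div_eq_div_iff hrd (hden l)]
    ring
  rw [hsum, hneg, sub_neg_eq_add, Faux]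
  congr 1
  refine Finset.sum_congr rfl fun l _ => ?_
  rw [geo l]
  have hQ : ((q ^ x₀ : ℚ_[p])) ^ l = q ^ ((l : ℤ) * x₀) := by
    rw [zpow_mul', zpow_natCast]
  rw [← hQ, div_mul_div_comm]

lemma Faux_one (hv : (1 : ℚ_[p]) - q ≠ 0) (hden : ∀ l : ℕ, (1 : ℚ_[p]) + q ^ (l + 1) ≠ 0)
    (n : ℕ) (x₀ : ℤ) : Faux q n x₀ 1 = xi q n x₀ := by
  rw [Faux, xi, Finset.mul_sum, Finset.mul_sum]
  refine Finset.sum_congr rfl fun l _ => ?_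
  rw [one_pow]
  have h2 : (1 : ℚ_[p]) + 1 ≠ 0 := by norm_num
  have hvn : (1 - q) ^ n ≠ 0 := pow_ne_zero _ hv
  rw [div_mul_div_comm, div_mul_div_comm,
    div_eq_div_iff (mul_ne_zero h2 (mul_ne_zero hvn (hden l)))
      (mul_ne_zero hvn (hden l))]
  ring

lemma part2 (hv : (1 : ℚ_[p]) - q ≠ 0) (_hden : ∀ l : ℕ, (1 : ℚ_[p]) + q ^ (l + 1) ≠ 0)
    (n : ℕ) (x₀ : ℤ) :
    xi q n x₀ = ∑ l ∈ Finset.range (n + 1),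
      (n.choose l : ℚ_[p]) * (qnum q x₀) ^ (n - l) * q ^ ((l : ℤ) * x₀) * xi q l 0 := by
  set a : ℚ_[p] := 1 - q ^ x₀ with ha
  set b : ℚ_[p] := q ^ x₀ with hb
  have hba : b + a = 1 := by rw [ha, hb]; ring
  have hQ : ∀ l : ℕ, (b : ℚ_[p]) ^ l = q ^ ((l : ℤ) * x₀) := fun l => by
    rw [hb, zpow_mul', zpow_natCast]
  have key : ∑ l ∈ Finset.range (n + 1),
      (n.choose l : ℚ_[p]) * (qnum q x₀) ^ (n - l) * q ^ ((l : ℤ) * x₀) * xi q l 0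
      = ((1 + q) / (1 - q) ^ n) * ∑ j ∈ Finset.range (n + 1),
          ∑ l ∈ Finset.Ico j (n + 1),
            ((n.choose l : ℚ_[p]) * (l.choose j : ℚ_[p])) * a ^ (n - l) * b ^ l
              * ((-1) ^ j / (1 + q ^ (j + 1))) := by
    rw [← Finset.sum_comm'
      (s := Finset.range (n + 1)) (t := fun l => Finset.range (l + 1))
      (t' := Finset.range (n + 1)) (s' := fun j => Finset.Ico j (n + 1))
      (by intro l j; simp only [Finset.mem_range, Finset.mem_Ico]; omega), Finset.mul_sum]
    refine Finset.sum_congr rfl fun l hl => ?_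
    have hln : l ≤ n := Nat.lt_succ_iff.mp (Finset.mem_range.mp hl)
    rw [xi, qnum, ← hQ l]
    simp only [mul_zero, zpow_zero, mul_one]
    rw [div_pow]
    simp only [Finset.mul_sum]
    refine Finset.sum_congr rfl fun j hj => ?_
    have hvn : (1 - q) ^ n = (1 - q) ^ (n - l) * (1 - q) ^ l := by
      rw [← pow_add, Nat.sub_add_cancel hln]
    have hvl : (1 - q) ^ l ≠ 0 := pow_ne_zero _ hv
    have hvnl : (1 - q) ^ (n - l) ≠ 0 := pow_ne_zero _ hv
    rw [hvn]
    field_simp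
    ring
  have inner : ∀ j ∈ Finset.range (n + 1),
      ∑ l ∈ Finset.Ico j (n + 1),
          ((n.choose l : ℚ_[p]) * (l.choose j : ℚ_[p])) * a ^ (n - l) * b ^ l
        = (n.choose j : ℚ_[p]) * b ^ j := by
    intro j hj
    have hjn : j ≤ n := Nat.lt_succ_iff.mp (Finset.mem_range.mp hj)
    rw [Finset.sum_Ico_eq_sum_range, show n + 1 - j = (n - j) + 1 from by omega]
    have step : ∀ k ∈ Finset.range (n - j + 1),
        ((n.choose (j + k) : ℚ_[p]) * ((j + k).choose j : ℚ_[p])) * a ^ (n - (j + k)) * b ^ (j + k)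
        = (n.choose j : ℚ_[p]) * b ^ j
            * (((n - j).choose k : ℚ_[p]) * b ^ k * a ^ (n - j - k)) := by
      intro k hk
      have hk' : k ≤ n - j := Nat.lt_succ_iff.mp (Finset.mem_range.mp hk)
      have hcast : (n.choose (j + k)) * ((j + k).choose j) = n.choose j * (n - j).choose k := by
        rw [Nat.choose_mul (by omega), Nat.add_sub_cancel_left]
      have hpow : b ^ (j + k) = b ^ j * b ^ k := pow_add b j k
      have hsub : n - (j + k) = n - j - k := by omega
      rw [hsub, hpow]
      calc ((n.choose (j + k) : ℚ_[p]) * ((j + k).choose j : ℚ_[p])) * a ^ (n - j - k)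
            * (b ^ j * b ^ k)
          = ((n.choose (j + k) * (j + k).choose j : ℕ) : ℚ_[p]) * a ^ (n - j - k)
            * (b ^ j * b ^ k) := by push_cast; ring
        _ = ((n.choose j * (n - j).choose k : ℕ) : ℚ_[p]) * a ^ (n - j - k)
            * (b ^ j * b ^ k) := by rw [hcast]
        _ = _ := by push_cast; ring
    rw [Finset.sum_congr rfl step, ← Finset.mul_sum]
    have hsum1 : ∑ k ∈ Finset.range (n - j + 1),
        ((n - j).choose k : ℚ_[p]) * b ^ k * a ^ (n - j - k) = 1 := by
      calc ∑ k ∈ Finset.range (n - j + 1), ((n - j).choose k : ℚ_[p]) * b ^ k * a ^ (n - j - k)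
          = ∑ k ∈ Finset.range (n - j + 1), b ^ k * a ^ (n - j - k) * ((n - j).choose k : ℚ_[p]) :=
            Finset.sum_congr rfl fun k _ => by ring
        _ = (b + a) ^ (n - j) := (add_pow b a (n - j)).symm
        _ = 1 := by rw [hba, one_pow]
    rw [hsum1, mul_one]
  rw [key, xi]
  congr 1
  refine Finset.sum_congr rfl fun j hj => ?_
  rw [← Finset.sum_mul, inner j hj, ← hQ j]
  ring

end main

theorem stmt0 (p : ℕ) [Fact p.Prime] (hp : Odd p) (q : ℚ_[p]) (hq : ‖1 - q‖ < 1) (hq1 : q ≠ 1) (n : ℕ) (x₀ : ℤ) :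
    fermionicIntegral p q (fun y => (qnum q (x₀ + y)) ^ n) (xi q n x₀) ∧
      xi q n x₀ = ∑ l ∈ Finset.range (n + 1),
        (n.choose l : ℚ_[p]) * (qnum q x₀) ^ (n - l) * q ^ ((l : ℤ) * x₀) * xi q l 0 := by
  have hq0 : q ≠ 0 := q_ne_zero hq
  have hv : (1 : ℚ_[p]) - q ≠ 0 := sub_ne_zero.mpr fun h => hq1 h.symm
  have hden : ∀ l : ℕ, (1 : ℚ_[p]) + q ^ (l + 1) ≠ 0 := fun l => one_add_pow_ne_zero hp hq _
  constructor
  · have h1 := (Faux_cont (q := q) n x₀).tendsto.comp (tendsto_q_pow_pow hq)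
    rw [Faux_one hv hden n x₀] at h1
    exact h1.congr fun N => (sum_eq_aux hq0 hden n x₀ (p ^ N) hp.pow).symm
  · exact part2 hv hden n x₀
end

section
/- (Theorem 1) For every integer n ≥ 1, ξ_{n,q}(2) = 1 + 1/q + (1/q²)·ξ_{n,q}. -/
open Finset Filter

theorem stmt2 (p : ℕ) [Fact p.Prime] (hp : Odd p) (q : ℚ_[p]) (hq : ‖1 - q‖ < 1) (hq1 : q ≠ 1) (n : ℕ) (hn : 1 ≤ n) :
    xi q n 2 = 1 + 1 / q + (1 / q ^ 2) * xi q n 0 := by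
  have hq0 : q ≠ 0 := by rintro rfl; simp at hq
  have hqs : (1 : ℚ_[p]) - q ≠ 0 := sub_ne_zero.mpr (Ne.symm hq1)
  have hnq : ‖q‖ ≤ 1 := by
    have h := Padic.nonarchimedean (1 : ℚ_[p]) (-(1 - q))
    have e : (1 : ℚ_[p]) + -(1 - q) = q := by ring
    rw [e, norm_neg, norm_one] at h
    exact h.trans (max_le le_rfl hq.le)
  have hlt : ∀ m : ℕ, ‖1 - q ^ (m + 1)‖ < 1 := by
    intro m
    induction m with
    | zero => simpa using hq
    | succ k ih =>
      have e : (1 : ℚ_[p]) - q ^ (k + 2) = (1 - q ^ (k + 1)) + q ^ (k + 1) * (1 - q) := by ring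
      rw [e]
      refine lt_of_le_of_lt (Padic.nonarchimedean _ _) (max_lt ih ?_)
      calc ‖q ^ (k + 1) * (1 - q)‖ = ‖q‖ ^ (k + 1) * ‖1 - q‖ := by
            rw [norm_mul, norm_pow]
        _ ≤ 1 * ‖1 - q‖ := by
            gcongr
            exact pow_le_one₀ (norm_nonneg q) hnq
        _ < 1 := by simpa using hq
  have hd : ∀ l : ℕ, (1 : ℚ_[p]) + q ^ (l + 1) ≠ 0 := by
    intro l h
    have hql : q ^ (l + 1) = -1 := eq_neg_of_add_eq_zero_right h
    have h2 : ‖((2 : ℤ) : ℚ_[p])‖ < 1 := by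
      have h3 := hlt l
      have e : (1 : ℚ_[p]) - q ^ (l + 1) = ((2 : ℤ) : ℚ_[p]) := by rw [hql]; norm_num
      rwa [e] at h3
    rw [Padic.norm_intCast_lt_one_iff] at h2
    have hpd : p ∣ 2 := by exact_mod_cast h2
    have := (Nat.prime_dvd_prime_iff_eq (Fact.out : p.Prime) Nat.prime_two).mp hpd
    subst this
    exact absurd hp (by decide)
  have binom : ∀ x : ℚ_[p],
      ∑ l ∈ Finset.range (n + 1), (n.choose l : ℚ_[p]) * x ^ l = (x + 1) ^ n := by
    intro x
    rw [add_pow]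
    refine Finset.sum_congr rfl fun l _ => ?_
    ring
  have hzero : ∑ l ∈ Finset.range (n + 1), (n.choose l : ℚ_[p]) * (-1) ^ l = 0 := by
    have := binom (-1)
    simpa [zero_pow (Nat.one_le_iff_ne_zero.mp hn)] using this
  have hbq : ∑ l ∈ Finset.range (n + 1), (n.choose l : ℚ_[p]) * (-q) ^ l = (1 - q) ^ n := by
    have := binom (-q)
    rw [this]
    ring_nf
  -- the key sum identity
  have key :
      ∑ l ∈ Finset.range (n + 1),
          (n.choose l : ℚ_[p]) * (-1) ^ l * q ^ ((l : ℤ) * 2) / (1 + q ^ (l + 1))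
        = q⁻¹ ^ 2 *
            ∑ l ∈ Finset.range (n + 1),
              (n.choose l : ℚ_[p]) * (-1) ^ l * q ^ ((l : ℤ) * 0) / (1 + q ^ (l + 1))
          + q⁻¹ * (1 - q) ^ n := by
    have hterm : ∀ l ∈ Finset.range (n + 1),
        (n.choose l : ℚ_[p]) * (-1) ^ l * q ^ ((l : ℤ) * 2) / (1 + q ^ (l + 1))
          = q⁻¹ ^ 2 * ((n.choose l : ℚ_[p]) * (-1) ^ l * q ^ ((l : ℤ) * 0) / (1 + q ^ (l + 1)))
            + q⁻¹ ^ 2 * ((n.choose l : ℚ_[p]) * (-1) ^ l * (q ^ (l + 1) - 1)) := by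
      intro l _
      have e2 : q ^ ((l : ℤ) * 2) = q ^ (2 * l) := by
        rw [show ((l : ℤ) * 2) = ((2 * l : ℕ) : ℤ) by push_cast; ring, zpow_natCast]
      have e0 : q ^ ((l : ℤ) * 0) = 1 := by rw [mul_zero, zpow_zero]
      have hdl : (1 : ℚ_[p]) + q ^ (l + 1) ≠ 0 := hd l
      rw [e2, e0]
      field_simp
      ring
    rw [Finset.sum_congr rfl hterm, Finset.sum_add_distrib, ← Finset.mul_sum,
      ← Finset.mul_sum]
    congr 1
    have e : ∀ l ∈ Finset.range (n + 1),
        (n.choose l : ℚ_[p]) * (-1) ^ l * (q ^ (l + 1) - 1)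
          = q * ((n.choose l : ℚ_[p]) * (-q) ^ l) - (n.choose l : ℚ_[p]) * (-1) ^ l := by
      intro l _
      rw [neg_pow]
      ring
    rw [Finset.sum_congr rfl e, Finset.sum_sub_distrib, ← Finset.mul_sum, hbq, hzero]
    field_simp
    ring
  have hpow : (1 - q) ^ n ≠ 0 := pow_ne_zero _ hqs
  rw [xi, xi, key]
  field_simp
  ring
end

section
/- (Equation (16)) For every integer n ≥ 0, the fermionic p-adic q-integral of x ↦ [1−x]_{1/q}^n exists and ∫_{ℤ_p} [1−x]_{1/q}^n dμ_{−q}(x) = ξ_{n,1/q}(2), where ξ_{n,1/q} denotes the q-Euler polynomial with parameter 1/q in place of q. -/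
open Finset Filter

section Helpers

variable {p : ℕ} [Fact p.Prime]


lemma my_norm_sum_le_one {ι : Type*} (s : Finset ι) (f : ι → ℚ_[p]) (h : ∀ i ∈ s, ‖f i‖ ≤ 1) :
    ‖∑ i ∈ s, f i‖ ≤ 1 := by
  induction s using Finset.cons_induction with
  | empty => simp
  | cons a s ha ih =>
    rw [Finset.sum_cons]
    exact le_trans (Padic.nonarchimedean _ _)
      (max_le (h a (Finset.mem_cons_self a s)) (ih fun i hi => h i (Finset.mem_cons_of_mem hi)))

lemma my_norm_le_one {q : ℚ_[p]} (hq : ‖1 - q‖ < 1) : ‖q‖ ≤ 1 := by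
  have : q = 1 + -(1 - q) := by ring
  calc ‖q‖ = ‖(1:ℚ_[p]) + -(1-q)‖ := by rw [← this]
  _ ≤ max ‖(1:ℚ_[p])‖ ‖-(1-q)‖ := Padic.nonarchimedean _ _
  _ ≤ 1 := by rw [norm_neg, norm_one]; exact max_le le_rfl hq.le

lemma my_q_ne_zero {q : ℚ_[p]} (hq : ‖1 - q‖ < 1) : q ≠ 0 := by
  intro h
  rw [h, sub_zero, norm_one] at hq
  exact lt_irrefl 1 hq

lemma my_norm_one_sub_pow {q : ℚ_[p]} (hq : ‖1 - q‖ < 1) (k : ℕ) : ‖1 - q ^ k‖ < 1 := by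
  have h1 : (1:ℚ_[p]) - q ^ k = (∑ i ∈ Finset.range k, q ^ i) * (1 - q) := by
    linear_combination geom_sum_mul q k
  rw [h1, norm_mul]
  calc ‖∑ i ∈ Finset.range k, q ^ i‖ * ‖1 - q‖ ≤ 1 * ‖1 - q‖ := by
        apply mul_le_mul_of_nonneg_right _ (norm_nonneg _)
        exact my_norm_sum_le_one _ _ fun i _ => by
          rw [norm_pow]; exact pow_le_one₀ (norm_nonneg _) (my_norm_le_one hq)
  _ = ‖1 - q‖ := one_mul _
  _ < 1 := hq

lemma my_two_norm (hp : Odd p) : ‖(2:ℚ_[p])‖ = 1 := by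
  have h2 : ((2:ℤ) : ℚ_[p]) = 2 := by norm_cast
  have hle : ‖(2:ℚ_[p])‖ ≤ 1 := by rw [← h2]; exact Padic.norm_int_le_one 2
  rcases lt_or_eq_of_le hle with h | h
  · exfalso
    rw [← h2, Padic.norm_intCast_lt_one_iff] at h
    have hd : p ∣ 2 := Int.ofNat_dvd.mp (by exact_mod_cast h)
    have h1 := Nat.le_of_dvd (by norm_num) hd
    have h2 := (Fact.out : p.Prime).two_le
    have h3 := Nat.odd_iff.mp hp
    omega
  · exact h

lemma my_one_add_ne_zero (hp : Odd p) {u : ℚ_[p]} (hu : ‖1 - u‖ < 1) : 1 + u ≠ 0 := by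
  intro h
  have : (2:ℚ_[p]) - (1 - u) = 1 + u := by ring
  have h2 : ‖(2:ℚ_[p]) - (1-u)‖ > 0 := by
    have := norm_sub_norm_le (2:ℚ_[p]) (1-u)
    rw [my_two_norm hp] at this
    linarith
  rw [this, h] at h2
  simp at h2

lemma my_step {u : ℚ_[p]} (hu : ‖u‖ ≤ 1) :
    ‖1 - u ^ p‖ ≤ ‖1 - u‖ * max ‖(p:ℚ_[p])‖ ‖1 - u‖ := by
  set W : ℚ_[p] := ∑ i ∈ Finset.range p, ∑ j ∈ Finset.range i, u ^ j with hW
  have hpow : ∀ k : ℕ, ‖u ^ k‖ ≤ 1 := fun k => by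
    rw [norm_pow]; exact pow_le_one₀ (norm_nonneg _) hu
  have hWle : ‖W‖ ≤ 1 :=
    my_norm_sum_le_one _ _ fun i _ => my_norm_sum_le_one _ _ fun j _ => hpow j
  have hS : (∑ i ∈ Finset.range p, u ^ i) = (p : ℚ_[p]) - (1 - u) * W := by
    have h1 : ∀ i : ℕ, u ^ i - 1 = -((1 - u) * ∑ j ∈ Finset.range i, u ^ j) := fun i => by
      linear_combination -geom_sum_mul u i
    have h2 : (∑ i ∈ Finset.range p, u ^ i) - (p : ℚ_[p]) =
        ∑ i ∈ Finset.range p, (u ^ i - 1) := by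
      rw [Finset.sum_sub_distrib]
      simp
    have h3 : ∑ i ∈ Finset.range p, (u ^ i - 1) = -((1 - u) * W) := by
      rw [hW, Finset.mul_sum, ← Finset.sum_neg_distrib]
      exact Finset.sum_congr rfl fun i _ => h1 i
    linear_combination h2 + h3
  have h4 : (1:ℚ_[p]) - u ^ p = (1 - u) * ((p : ℚ_[p]) - (1 - u) * W) := by
    rw [← hS]
    linear_combination geom_sum_mul u p
  rw [h4, norm_mul]
  apply mul_le_mul_of_nonneg_left _ (norm_nonneg _)
  calc ‖(p : ℚ_[p]) - (1 - u) * W‖ ≤ max ‖(p:ℚ_[p])‖ ‖-((1 - u) * W)‖ := by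
        rw [sub_eq_add_neg]; exact Padic.nonarchimedean _ _
  _ ≤ max ‖(p:ℚ_[p])‖ ‖1 - u‖ := by
      apply max_le_max le_rfl
      rw [norm_neg, norm_mul]
      exact mul_le_of_le_one_right (norm_nonneg _) hWle

lemma my_key {q : ℚ_[p]} (hq : ‖1 - q‖ < 1) :
    Tendsto (fun N : ℕ => q ^ p ^ N) atTop (nhds 1) := by
  have hqle : ‖q‖ ≤ 1 := by
    have : q = 1 + -(1 - q) := by ring
    calc ‖q‖ = ‖(1:ℚ_[p]) + -(1-q)‖ := by rw [← this]
    _ ≤ max ‖(1:ℚ_[p])‖ ‖-(1-q)‖ := Padic.nonarchimedean _ _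
    _ ≤ 1 := by rw [norm_neg, norm_one]; exact max_le le_rfl hq.le
  set r : ℝ := max ‖(p:ℚ_[p])‖ ‖1 - q‖ with hr
  have hr0 : 0 ≤ r := le_max_of_le_left (norm_nonneg _)
  have hr1 : r < 1 := max_lt (Padic.norm_p_lt_one) hq
  have hbound : ∀ N : ℕ, ‖1 - q ^ p ^ N‖ ≤ r ^ N * ‖1 - q‖ := by
    intro N
    induction N with
    | zero => simp
    | succ N ih =>
      have hu : ‖q ^ p ^ N‖ ≤ 1 := by
        rw [norm_pow]; exact pow_le_one₀ (norm_nonneg _) hqle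
      have h1 : q ^ p ^ (N + 1) = (q ^ p ^ N) ^ p := by
        rw [← pow_mul, pow_succ]
      rw [h1]
      calc ‖1 - (q ^ p ^ N) ^ p‖
          ≤ ‖1 - q ^ p ^ N‖ * max ‖(p:ℚ_[p])‖ ‖1 - q ^ p ^ N‖ := my_step hu
      _ ≤ (r ^ N * ‖1 - q‖) * r := by
          apply mul_le_mul ih _ (le_max_of_le_left (norm_nonneg _))
            (mul_nonneg (pow_nonneg hr0 N) (norm_nonneg _))
          apply max_le (le_max_left _ _)
          calc ‖1 - q ^ p ^ N‖ ≤ r ^ N * ‖1 - q‖ := ih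
          _ ≤ 1 * ‖1 - q‖ := by
              apply mul_le_mul_of_nonneg_right (pow_le_one₀ hr0 hr1.le) (norm_nonneg _)
          _ ≤ r := by rw [one_mul]; exact le_max_right _ _
      _ = r ^ (N + 1) * ‖1 - q‖ := by ring
  rw [← tendsto_sub_nhds_zero_iff]
  apply squeeze_zero_norm (fun N => ?_)
    (by simpa using (tendsto_pow_atTop_nhds_zero_of_lt_one hr0 hr1).mul_const ‖1 - q‖)
  rw [norm_sub_rev]
  exact hbound N

end Helpers

theorem stmt6 (p : ℕ) [Fact p.Prime] (hp : Odd p) (q : ℚ_[p]) (hq : ‖1 - q‖ < 1) (hq1 : q ≠ 1) (n : ℕ) :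
    fermionicIntegral p q (fun x => (qnum q⁻¹ (1 - x)) ^ n) (xi q⁻¹ n 2) := by
  have hq0 : q ≠ 0 := my_q_ne_zero hq
  have hq1' : q - 1 ≠ 0 := sub_ne_zero.mpr (fun h => hq1 h)
  have hd' : ∀ k : ℕ, (1 : ℚ_[p]) + q ^ k ≠ 0 := fun k =>
    my_one_add_ne_zero hp (my_norm_one_sub_pow hq k)
  have h1i : (1 : ℚ_[p]) - q⁻¹ ≠ 0 :=
    sub_ne_zero.mpr fun h => hq1 (by rw [← inv_inv q, ← h, inv_one])
  have hgA : ∀ x : ℕ, qnum q⁻¹ (1 - (x : ℤ)) = (q - q ^ x) / (q - 1) := by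
    intro x
    rw [qnum, inv_zpow', neg_sub, zpow_sub₀ hq0, zpow_natCast, zpow_one]
    field_simp
  have hfun : ∀ N : ℕ,
      ((1 + q) / (1 - (-q) ^ p ^ N)) *
          ∑ x ∈ Finset.range (p ^ N), (qnum q⁻¹ (1 - (x : ℤ))) ^ n * (-q) ^ x =
        ((1 + q) / (1 + q ^ p ^ N)) *
          ∑ l ∈ Finset.range (n + 1),
            (n.choose l : ℚ_[p]) * (-1) ^ l * q ^ (n - l) * (1 + (q ^ p ^ N) ^ (l + 1)) /
              ((1 + q ^ (l + 1)) * (q - 1) ^ n) := by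
    intro N
    have hodd : Odd (p ^ N) := hp.pow
    rw [hodd.neg_pow, sub_neg_eq_add]
    congr 1
    calc ∑ x ∈ Finset.range (p ^ N), (qnum q⁻¹ (1 - (x : ℤ))) ^ n * (-q) ^ x
        = ∑ x ∈ Finset.range (p ^ N), ∑ l ∈ Finset.range (n + 1),
            (-(q ^ x)) ^ l * q ^ (n - l) * (n.choose l : ℚ_[p]) * (-q) ^ x / (q - 1) ^ n := by
          refine Finset.sum_congr rfl fun x _ => ?_
          have hb : (q - q ^ x) ^ n = ∑ l ∈ Finset.range (n + 1),
              (-(q ^ x)) ^ l * q ^ (n - l) * (n.choose l : ℚ_[p]) := by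
            rw [show q - q ^ x = -(q ^ x) + q by ring, add_pow]
          rw [hgA x, div_pow, hb, div_mul_eq_mul_div, Finset.sum_mul, Finset.sum_div]
      _ = ∑ l ∈ Finset.range (n + 1), ∑ x ∈ Finset.range (p ^ N),
            (-(q ^ x)) ^ l * q ^ (n - l) * (n.choose l : ℚ_[p]) * (-q) ^ x / (q - 1) ^ n :=
          Finset.sum_comm
      _ = ∑ l ∈ Finset.range (n + 1),
            (n.choose l : ℚ_[p]) * (-1) ^ l * q ^ (n - l) * (1 + (q ^ p ^ N) ^ (l + 1)) /
              ((1 + q ^ (l + 1)) * (q - 1) ^ n) := by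
          refine Finset.sum_congr rfl fun l _ => ?_
          have hx : ∀ x : ℕ, (-(q ^ x)) ^ l * q ^ (n - l) * (n.choose l : ℚ_[p]) * (-q) ^ x / (q - 1) ^ n
              = ((n.choose l : ℚ_[p]) * (-1) ^ l * q ^ (n - l) / (q - 1) ^ n) * (-(q ^ (l + 1))) ^ x := by
            intro x
            rw [neg_pow (q ^ x) l, neg_pow q x, neg_pow (q ^ (l + 1)) x, ← pow_mul, ← pow_mul,
              show x * l = l * x by ring, show (l + 1) * x = l * x + x by ring, pow_add]
            ring
          rw [Finset.sum_congr rfl (fun x _ => hx x), ← Finset.mul_sum]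
          have hne : -(q ^ (l + 1)) ≠ 1 := by
            intro h
            exact hd' (l + 1) (by linear_combination -h)
          rw [geom_sum_eq hne, hodd.neg_pow, ← pow_mul, show (l + 1) * p ^ N = p ^ N * (l + 1) by ring,
            pow_mul]
          have hne2 : -(q ^ (l + 1)) - 1 ≠ 0 := by
            intro h
            exact hd' (l + 1) (by linear_combination -h)
          have hquot : (-(q ^ p ^ N) ^ (l + 1) - 1) / (-(q ^ (l + 1)) - 1)
              = (1 + (q ^ p ^ N) ^ (l + 1)) / (1 + q ^ (l + 1)) := by
            rw [div_eq_div_iff hne2 (hd' (l + 1))]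
            ring
          rw [hquot, div_mul_div_comm, mul_comm ((q - 1) ^ n) (1 + q ^ (l + 1))]
  refine Tendsto.congr (fun N => (hfun N).symm) ?_
  have hw := my_key hq
  have h2 : (1 : ℚ_[p]) + 1 ≠ 0 := by norm_num
  have hL : Tendsto
      (fun N : ℕ => ((1 + q) / (1 + q ^ p ^ N)) *
        ∑ l ∈ Finset.range (n + 1),
          (n.choose l : ℚ_[p]) * (-1) ^ l * q ^ (n - l) * (1 + (q ^ p ^ N) ^ (l + 1)) /
            ((1 + q ^ (l + 1)) * (q - 1) ^ n)) atTop
      (nhds (((1 + q) / (1 + 1)) *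
        ∑ l ∈ Finset.range (n + 1),
          (n.choose l : ℚ_[p]) * (-1) ^ l * q ^ (n - l) * (1 + (1 : ℚ_[p]) ^ (l + 1)) /
            ((1 + q ^ (l + 1)) * (q - 1) ^ n))) := by
    refine Tendsto.mul (Tendsto.div tendsto_const_nhds (tendsto_const_nhds.add hw) h2) ?_
    refine tendsto_finset_sum _ fun l _ => ?_
    exact Tendsto.div_const (Tendsto.const_mul _ (tendsto_const_nhds.add (hw.pow (l + 1)))) _
  have hxi : ((1 + q) / (1 + 1)) *
      ∑ l ∈ Finset.range (n + 1),
        (n.choose l : ℚ_[p]) * (-1) ^ l * q ^ (n - l) * (1 + (1 : ℚ_[p]) ^ (l + 1)) /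
          ((1 + q ^ (l + 1)) * (q - 1) ^ n) = xi q⁻¹ n 2 := by
    rw [xi, Finset.mul_sum, Finset.mul_sum]
    refine Finset.sum_congr rfl fun l hl => ?_
    have hl' : l ≤ n := Nat.lt_succ_iff.mp (Finset.mem_range.mp hl)
    have hz : (q⁻¹ : ℚ_[p]) ^ ((l : ℤ) * 2) = (q⁻¹) ^ (2 * l) := by
      rw [show ((l : ℤ) * 2) = ((2 * l : ℕ) : ℤ) by push_cast; ring, zpow_natCast]
    have hinv : (1 : ℚ_[p]) + (q ^ (l + 1))⁻¹ ≠ 0 := by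
      intro h
      have h' := congrArg (fun t => t * q ^ (l + 1)) h
      simp only [add_mul, one_mul, inv_mul_cancel₀ (pow_ne_zero (l + 1) hq0), zero_mul] at h'
      exact hd' (l + 1) (by linear_combination h')
    have e1 : (1 : ℚ_[p]) + q⁻¹ = (1 + q) / q := by field_simp; ring
    have e2 : (1 : ℚ_[p]) - q⁻¹ = (q - 1) / q := by field_simp
    have e3 : (1 : ℚ_[p]) + q⁻¹ ^ (l + 1) = (1 + q ^ (l + 1)) / q ^ (l + 1) := by
      rw [inv_pow]; field_simp; ring
    have hqn : q ^ n = q ^ (n - l) * q ^ l := by rw [← pow_add]; congr 1; omega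
    rw [hz, e1, e2, e3, inv_pow, one_pow, div_pow, hqn]
    field_simp [hd' (l + 1), h2]
    ring
  rw [← hxi]
  exact hL
end

section
/- (Theorem 5) For every integer n ≥ 1, both fermionic integrals below exist and ∫_{ℤ_p} [1−x]_{1/q}^n dμ_{−q}(x) = q²·∫_{ℤ_p} [x]_{1/q}^n dμ_{−1/q}(x) + q + 1, and this common value equals [2]_q + q²·ξ_{n,1/q}, where ξ_{n,1/q} denotes the q-Euler number with parameter 1/q in place of q. -/
open Finset Filter

namespace Stmt7Aux

variable {p : ℕ} [Fact p.Prime]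

lemma norm_le_one' {u : ℚ_[p]} (hu : ‖u - 1‖ ≤ 1) : ‖u‖ ≤ 1 := by
  have h := IsUltrametricDist.norm_add_le_max (u - 1) 1
  rw [sub_add_cancel] at h
  exact h.trans (max_le hu (by simp))

lemma pow_sub_one_le {u : ℚ_[p]} (hu : ‖u - 1‖ ≤ 1) (m : ℕ) : ‖u ^ m - 1‖ ≤ ‖u - 1‖ := by
  induction m with
  | zero => simpa using norm_nonneg _
  | succ k ih =>
    have h : u ^ (k + 1) - 1 = u * (u ^ k - 1) + (u - 1) := by ring
    rw [h]
    refine (IsUltrametricDist.norm_add_le_max _ _).trans (max_le ?_ le_rfl)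
    rw [norm_mul]
    calc ‖u‖ * ‖u ^ k - 1‖ ≤ 1 * ‖u - 1‖ :=
          mul_le_mul (norm_le_one' hu) ih (norm_nonneg _) zero_le_one
      _ = ‖u - 1‖ := one_mul _

lemma step_bound {v : ℚ_[p]} (hv : ‖v - 1‖ ≤ 1) :
    ‖v ^ p - 1‖ ≤ max ‖v - 1‖ (p : ℝ)⁻¹ * ‖v - 1‖ := by
  have hgeom := geom_sum_mul v p
  rw [← hgeom, norm_mul]
  refine mul_le_mul_of_nonneg_right ?_ (norm_nonneg _)
  have hdecomp : (∑ i ∈ range p, v ^ i) = (∑ i ∈ range p, (v ^ i - 1)) + p := by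
    rw [Finset.sum_sub_distrib]
    simp
  rw [hdecomp]
  refine (IsUltrametricDist.norm_add_le_max _ _).trans (max_le_max ?_ ?_)
  · exact IsUltrametricDist.norm_sum_le_of_forall_le_of_nonneg (norm_nonneg _)
      (fun i _ => pow_sub_one_le hv i)
  · rw [Padic.norm_p]

lemma iter_bound {u : ℚ_[p]} (hu : ‖u - 1‖ < 1) (N : ℕ) :
    ‖u ^ p ^ N - 1‖ ≤ (max ‖u - 1‖ (p : ℝ)⁻¹) ^ N * ‖u - 1‖ := by
  have hp1 : (1 : ℝ) ≤ p := by
    exact_mod_cast Nat.one_le_iff_ne_zero.mpr (Fact.out : p.Prime).ne_zero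
  have hinv : (p : ℝ)⁻¹ ≤ 1 := inv_le_one_of_one_le₀ hp1
  have hmax1 : max ‖u - 1‖ (p : ℝ)⁻¹ ≤ 1 := max_le hu.le hinv
  have hmax0 : 0 ≤ max ‖u - 1‖ (p : ℝ)⁻¹ := le_max_of_le_left (norm_nonneg _)
  induction N with
  | zero => simp
  | succ k ih =>
    have hvk : ‖u ^ p ^ k - 1‖ ≤ ‖u - 1‖ := by
      refine ih.trans ?_
      calc (max ‖u - 1‖ (p : ℝ)⁻¹) ^ k * ‖u - 1‖ ≤ 1 * ‖u - 1‖ := by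
            exact mul_le_mul_of_nonneg_right (pow_le_one₀ hmax0 hmax1) (norm_nonneg _)
        _ = ‖u - 1‖ := one_mul _
    have hstep := step_bound (v := u ^ p ^ k) (hvk.trans hu.le)
    rw [pow_succ, pow_mul]
    refine hstep.trans ?_
    calc max ‖u ^ p ^ k - 1‖ (p : ℝ)⁻¹ * ‖u ^ p ^ k - 1‖
        ≤ max ‖u - 1‖ (p : ℝ)⁻¹ * ((max ‖u - 1‖ (p : ℝ)⁻¹) ^ k * ‖u - 1‖) := by
          exact mul_le_mul (max_le_max hvk le_rfl) ih (norm_nonneg _) hmax0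
      _ = (max ‖u - 1‖ (p : ℝ)⁻¹) ^ (k + 1) * ‖u - 1‖ := by ring

lemma tendsto_pow_pow_p {u : ℚ_[p]} (hu : ‖u - 1‖ < 1) :
    Tendsto (fun N : ℕ => u ^ p ^ N) atTop (nhds 1) := by
  rw [tendsto_iff_norm_sub_tendsto_zero]
  have hplt : (1 : ℝ) < p := by exact_mod_cast (Fact.out : p.Prime).one_lt
  have hc1 : max ‖u - 1‖ (p : ℝ)⁻¹ < 1 := max_lt hu (inv_lt_one_of_one_lt₀ hplt)
  have hc0 : 0 ≤ max ‖u - 1‖ (p : ℝ)⁻¹ := le_max_of_le_left (norm_nonneg _)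
  refine squeeze_zero (fun N => norm_nonneg _) (fun N => iter_bound hu N) ?_
  simpa using (tendsto_pow_atTop_nhds_zero_of_lt_one hc0 hc1).mul_const ‖u - 1‖

lemma norm_two_eq_one (hp : Odd p) : ‖(2 : ℚ_[p])‖ = 1 := by
  have hcast : ((2 : ℤ) : ℚ_[p]) = 2 := by push_cast; ring
  refine le_antisymm (by rw [← hcast]; exact Padic.norm_int_le_one 2) ?_
  by_contra h
  push_neg at h
  have hdvd : (p : ℤ) ∣ 2 := (Padic.norm_intCast_lt_one_iff (k := 2)).mp (by rwa [hcast])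
  have hple : (p : ℤ) ≤ 2 := Int.le_of_dvd (by norm_num) hdvd
  have hp2 : 2 ≤ p := (Fact.out : p.Prime).two_le
  have hp' : p = 2 := by omega
  rw [hp'] at hp
  exact (by decide : ¬ Odd 2) hp

lemma one_add_pow_ne_zero (hp : Odd p) {u : ℚ_[p]} (hu : ‖u - 1‖ < 1) (m : ℕ) :
    1 + u ^ (m + 1) ≠ 0 := by
  intro h
  have hm : u ^ (m + 1) = -1 := by linear_combination h
  have hb := pow_sub_one_le hu.le (m + 1)
  rw [hm] at hb
  have : ‖(-1 : ℚ_[p]) - 1‖ = 1 := by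
    rw [show (-1 : ℚ_[p]) - 1 = -2 by ring, norm_neg, norm_two_eq_one hp]
  rw [this] at hb
  exact absurd (hb.trans_lt hu) (lt_irrefl 1)

lemma core_sum (a b : ℚ_[p]) (hb2 : ∀ l : ℕ, 1 + b ^ (l + 1) ≠ 0) (n m : ℕ) (hm : Odd m) :
    ∑ x ∈ range m, (1 - a * b ^ x) ^ n * (-b) ^ x
      = ∑ l ∈ range (n + 1),
          (n.choose l : ℚ_[p]) * (-a) ^ l * (1 + (b ^ m) ^ (l + 1)) / (1 + b ^ (l + 1)) := by
  have hexp : ∀ x : ℕ, (1 - a * b ^ x) ^ n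
      = ∑ l ∈ range (n + 1), (n.choose l : ℚ_[p]) * (-a) ^ l * (b ^ l) ^ x := by
    intro x
    rw [sub_eq_add_neg, add_comm, add_pow]
    refine sum_congr rfl fun l _ => ?_
    rw [one_pow, mul_one, show -(a * b ^ x) = (-a) * b ^ x by ring, mul_pow,
      pow_right_comm]
    ring
  calc ∑ x ∈ range m, (1 - a * b ^ x) ^ n * (-b) ^ x
      = ∑ x ∈ range m, ∑ l ∈ range (n + 1),
          (n.choose l : ℚ_[p]) * (-a) ^ l * (-(b ^ (l + 1))) ^ x := by
        refine sum_congr rfl fun x _ => ?_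
        rw [hexp x, sum_mul]
        refine sum_congr rfl fun l _ => ?_
        rw [show (-(b ^ (l + 1))) ^ x = (b ^ l) ^ x * (-b) ^ x by
          rw [← mul_pow]; congr 1; ring]
        ring
    _ = ∑ l ∈ range (n + 1),
          (n.choose l : ℚ_[p]) * (-a) ^ l * ∑ x ∈ range m, (-(b ^ (l + 1))) ^ x := by
        rw [Finset.sum_comm]
        exact sum_congr rfl fun l _ => (mul_sum _ _ _).symm
    _ = ∑ l ∈ range (n + 1),
          (n.choose l : ℚ_[p]) * (-a) ^ l * (1 + (b ^ m) ^ (l + 1)) / (1 + b ^ (l + 1)) := by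
        refine sum_congr rfl fun l _ => ?_
        have hne : -(b ^ (l + 1)) ≠ 1 := by
          intro h
          exact hb2 l (by rw [show b ^ (l + 1) = -1 by linear_combination -h]; ring)
        rw [geom_sum_eq hne m, hm.neg_pow, pow_right_comm,
          show -(b ^ m) ^ (l + 1) - 1 = -(1 + (b ^ m) ^ (l + 1)) by ring,
          show -b ^ (l + 1) - 1 = -(1 + b ^ (l + 1)) by ring, neg_div_neg_eq,
          mul_div_assoc]

lemma main_tendsto (hodd : Odd p) (a b c : ℚ_[p]) (hb : ‖b - 1‖ < 1)
    (hb2 : ∀ l : ℕ, 1 + b ^ (l + 1) ≠ 0) (n : ℕ) :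
    Tendsto (fun N : ℕ => ((1 + b) / (1 - (-b) ^ p ^ N)) *
        (c * ∑ x ∈ range (p ^ N), (1 - a * b ^ x) ^ n * (-b) ^ x)) atTop
      (nhds ((1 + b) * c *
        ∑ l ∈ range (n + 1), (n.choose l : ℚ_[p]) * (-a) ^ l / (1 + b ^ (l + 1)))) := by
  have hoddN : ∀ N : ℕ, Odd (p ^ N) := fun N => hodd.pow
  have ht : Tendsto (fun N : ℕ => b ^ p ^ N) atTop (nhds 1) := tendsto_pow_pow_p hb
  have h2ne : (2 : ℚ_[p]) ≠ 0 := two_ne_zero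
  have hpt : ∀ N : ℕ, ((1 + b) / (1 - (-b) ^ p ^ N)) *
      (c * ∑ x ∈ range (p ^ N), (1 - a * b ^ x) ^ n * (-b) ^ x)
      = ((1 + b) / (1 + b ^ p ^ N)) * (c * ∑ l ∈ range (n + 1),
          (n.choose l : ℚ_[p]) * (-a) ^ l * (1 + (b ^ p ^ N) ^ (l + 1)) / (1 + b ^ (l + 1))) := by
    intro N
    rw [core_sum a b hb2 n (p ^ N) (hoddN N), (hoddN N).neg_pow, sub_neg_eq_add]
  refine Tendsto.congr (fun N => (hpt N).symm) ?_
  have h2 : Tendsto (fun N : ℕ => (1 + b) / (1 + b ^ p ^ N)) atTop (nhds ((1 + b) / 2)) := by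
    refine Tendsto.div tendsto_const_nhds ?_ h2ne
    simpa [one_add_one_eq_two] using (tendsto_const_nhds (x := (1 : ℚ_[p]))).add ht
  have h3 : Tendsto (fun N : ℕ => ∑ l ∈ range (n + 1),
      (n.choose l : ℚ_[p]) * (-a) ^ l * (1 + (b ^ p ^ N) ^ (l + 1)) / (1 + b ^ (l + 1))) atTop
      (nhds (∑ l ∈ range (n + 1),
        (n.choose l : ℚ_[p]) * (-a) ^ l * 2 / (1 + b ^ (l + 1)))) := by
    refine tendsto_finset_sum _ fun l _ => ?_
    have hl : Tendsto (fun N : ℕ => 1 + (b ^ p ^ N) ^ (l + 1)) atTop (nhds 2) := by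
      simpa [one_add_one_eq_two] using (tendsto_const_nhds (x := (1 : ℚ_[p]))).add (ht.pow (l + 1))
    exact ((tendsto_const_nhds (x := (n.choose l : ℚ_[p]) * (-a) ^ l)).mul hl).div_const _
  have hfin := h2.mul ((tendsto_const_nhds (x := c)).mul h3)
  have hval : (1 + b) / 2 * (c * ∑ l ∈ range (n + 1),
      (n.choose l : ℚ_[p]) * (-a) ^ l * 2 / (1 + b ^ (l + 1)))
      = (1 + b) * c * ∑ l ∈ range (n + 1),
        (n.choose l : ℚ_[p]) * (-a) ^ l / (1 + b ^ (l + 1)) := by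
    have hs : (∑ l ∈ range (n + 1), (n.choose l : ℚ_[p]) * (-a) ^ l * 2 / (1 + b ^ (l + 1)))
        = 2 * ∑ l ∈ range (n + 1), (n.choose l : ℚ_[p]) * (-a) ^ l / (1 + b ^ (l + 1)) := by
      rw [Finset.mul_sum]
      exact sum_congr rfl fun l _ => by ring
    rw [hs]
    field_simp
  rwa [hval] at hfin

end Stmt7Aux

open Stmt7Aux in
theorem stmt7 (p : ℕ) [Fact p.Prime] (hp : Odd p) (q : ℚ_[p]) (hq : ‖1 - q‖ < 1) (hq1 : q ≠ 1) (n : ℕ) (hn : 1 ≤ n) :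
    ∃ I₁ I₂ : ℚ_[p],
      fermionicIntegral p q (fun x => (qnum q⁻¹ (1 - x)) ^ n) I₁ ∧
      fermionicIntegral p q⁻¹ (fun x => (qnum q⁻¹ x) ^ n) I₂ ∧
      I₁ = q ^ 2 * I₂ + q + 1 ∧
      I₁ = (1 + q) + q ^ 2 * xi q⁻¹ n 0 := by
  have hq0 : q ≠ 0 := by
    intro h; rw [h] at hq; simp at hq
  have hqnorm : ‖q‖ = 1 := by
    refine le_antisymm (norm_le_one' (by rw [norm_sub_rev]; exact hq.le)) ?_
    by_contra h
    push_neg at h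
    have h1 := IsUltrametricDist.norm_add_le_max q (1 - q)
    rw [show q + (1 - q) = 1 by ring, norm_one] at h1
    exact absurd (h1.trans_lt (max_lt h hq)) (lt_irrefl 1)
  have hq1' : ‖q - 1‖ < 1 := by rwa [norm_sub_rev]
  have hr0 : q⁻¹ ≠ 0 := inv_ne_zero hq0
  have hrnorm : ‖q⁻¹ - 1‖ < 1 := by
    have h : q⁻¹ - 1 = q⁻¹ * (1 - q) := by field_simp
    rw [h, norm_mul, norm_inv, hqnorm]
    simpa using hq
  have hr1 : (1 : ℚ_[p]) - q⁻¹ ≠ 0 :=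
    sub_ne_zero.mpr (Ne.symm fun h => hq1 (inv_eq_one.mp h))
  have hbq : ∀ l : ℕ, 1 + q ^ (l + 1) ≠ 0 := one_add_pow_ne_zero hp hq1'
  have hbr : ∀ l : ℕ, 1 + q⁻¹ ^ (l + 1) ≠ 0 := one_add_pow_ne_zero hp hrnorm
  set c : ℚ_[p] := ((1 - q⁻¹) ^ n)⁻¹ with hc
  have hcmul : c * (1 - q⁻¹) ^ n = 1 := inv_mul_cancel₀ (pow_ne_zero n hr1)
  -- I₂ : the integral with parameter q⁻¹
  have H₂ := main_tendsto hp 1 q⁻¹ c hrnorm hbr n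
  have hpt2 : ∀ N : ℕ, ((1 + q⁻¹) / (1 - (-q⁻¹) ^ p ^ N)) *
      ∑ x ∈ range (p ^ N), (qnum q⁻¹ x) ^ n * (-q⁻¹) ^ x
      = ((1 + q⁻¹) / (1 - (-q⁻¹) ^ p ^ N)) *
        (c * ∑ x ∈ range (p ^ N), (1 - 1 * q⁻¹ ^ x) ^ n * (-q⁻¹) ^ x) := by
    intro N
    congr 1
    rw [Finset.mul_sum]
    refine sum_congr rfl fun x _ => ?_
    rw [qnum, zpow_natCast, div_pow, one_mul, div_eq_mul_inv]
    ring
  have hval2 : (1 + q⁻¹) * c *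
      ∑ l ∈ range (n + 1), (n.choose l : ℚ_[p]) * (-1) ^ l / (1 + q⁻¹ ^ (l + 1))
      = xi q⁻¹ n 0 := by
    rw [xi]
    simp only [mul_zero, zpow_zero, mul_one]
    rw [div_eq_mul_inv]
  have hI₂ : fermionicIntegral p q⁻¹ (fun x => (qnum q⁻¹ x) ^ n) (xi q⁻¹ n 0) := by
    unfold fermionicIntegral
    rw [← hval2]
    exact Tendsto.congr (fun N => (hpt2 N).symm) H₂
  -- I₁ : the integral with parameter q
  have H₁ := main_tendsto hp q⁻¹ q c hq1' hbq n
  have hpt1 : ∀ N : ℕ, ((1 + q) / (1 - (-q) ^ p ^ N)) *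
      ∑ x ∈ range (p ^ N), (qnum q⁻¹ (1 - (x : ℤ))) ^ n * (-q) ^ x
      = ((1 + q) / (1 - (-q) ^ p ^ N)) *
        (c * ∑ x ∈ range (p ^ N), (1 - q⁻¹ * q ^ x) ^ n * (-q) ^ x) := by
    intro N
    congr 1
    rw [Finset.mul_sum]
    refine sum_congr rfl fun x _ => ?_
    have hz : q⁻¹ ^ ((1 : ℤ) - (x : ℤ)) = q⁻¹ * q ^ x := by
      rw [zpow_sub₀ hr0, zpow_one, zpow_natCast, inv_pow, div_eq_mul_inv, inv_inv]
    rw [qnum, hz, div_pow, div_eq_mul_inv]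
    ring
  have hval1 : (1 + q) * c *
      ∑ l ∈ range (n + 1), (n.choose l : ℚ_[p]) * (-q⁻¹) ^ l / (1 + q ^ (l + 1))
      = (1 + q) + q ^ 2 * xi q⁻¹ n 0 := by
    have hkey : ∀ l ∈ range (n + 1),
        (1 + q) * ((n.choose l : ℚ_[p]) * (-q⁻¹) ^ l / (1 + q ^ (l + 1)))
        = q ^ 2 * ((1 + q⁻¹) * ((n.choose l : ℚ_[p]) * (-1) ^ l / (1 + q⁻¹ ^ (l + 1))))
          + q ^ 2 * (1 + q⁻¹) *
            ((n.choose l : ℚ_[p]) * (-1) ^ l * (q⁻¹ ^ (l + 1) - 1)) := by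
      intro l _
      have hql : q ^ (l + 1) ≠ 0 := pow_ne_zero _ hq0
      have hbr' : (1 : ℚ_[p]) + (q ^ (l + 1))⁻¹ ≠ 0 := by
        simpa [inv_pow] using hbr l
      have hQ : q + q ^ 2 * q ^ l ≠ 0 := by
        have h : q + q ^ 2 * q ^ l = q * (1 + q ^ (l + 1)) := by ring
        rw [h]; exact mul_ne_zero hq0 (hbq l)
      have e : (1 : ℚ_[p]) + (q ^ (l + 1))⁻¹ = (1 + q ^ (l + 1)) / q ^ (l + 1) := by
        field_simp; ring
      simp only [inv_pow]
      rw [neg_pow, inv_pow, e]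
      have hbl := hbq l
      field_simp
      ring
    have hS : (1 + q) * ∑ l ∈ range (n + 1),
          (n.choose l : ℚ_[p]) * (-q⁻¹) ^ l / (1 + q ^ (l + 1))
        = q ^ 2 * ((1 + q⁻¹) * ∑ l ∈ range (n + 1),
            (n.choose l : ℚ_[p]) * (-1) ^ l / (1 + q⁻¹ ^ (l + 1)))
          + q ^ 2 * (1 + q⁻¹) * ∑ l ∈ range (n + 1),
            (n.choose l : ℚ_[p]) * (-1) ^ l * (q⁻¹ ^ (l + 1) - 1) := by
      rw [Finset.mul_sum, Finset.mul_sum, Finset.mul_sum, Finset.mul_sum,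
        ← Finset.sum_add_distrib]
      exact sum_congr rfl hkey
    have hS3 : ∑ l ∈ range (n + 1),
        (n.choose l : ℚ_[p]) * (-1) ^ l * (q⁻¹ ^ (l + 1) - 1)
        = q⁻¹ * (1 - q⁻¹) ^ n := by
      calc ∑ l ∈ range (n + 1), (n.choose l : ℚ_[p]) * (-1) ^ l * (q⁻¹ ^ (l + 1) - 1)
          = q⁻¹ * (∑ l ∈ range (n + 1), (-q⁻¹) ^ l * 1 ^ (n - l) * (n.choose l : ℚ_[p]))
            - ∑ l ∈ range (n + 1), (-1 : ℚ_[p]) ^ l * 1 ^ (n - l) * (n.choose l : ℚ_[p]) := by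
            rw [Finset.mul_sum, ← Finset.sum_sub_distrib]
            refine sum_congr rfl fun l _ => by ring
        _ = q⁻¹ * (-q⁻¹ + 1) ^ n - ((-1 : ℚ_[p]) + 1) ^ n := by rw [add_pow, add_pow]
        _ = q⁻¹ * (1 - q⁻¹) ^ n := by
            rw [show (-1 : ℚ_[p]) + 1 = 0 by ring, zero_pow (by omega : n ≠ 0),
              show -q⁻¹ + 1 = 1 - q⁻¹ by ring]
            ring
    calc (1 + q) * c * ∑ l ∈ range (n + 1),
          (n.choose l : ℚ_[p]) * (-q⁻¹) ^ l / (1 + q ^ (l + 1))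
        = c * ((1 + q) * ∑ l ∈ range (n + 1),
            (n.choose l : ℚ_[p]) * (-q⁻¹) ^ l / (1 + q ^ (l + 1))) := by ring
      _ = c * (q ^ 2 * ((1 + q⁻¹) * ∑ l ∈ range (n + 1),
            (n.choose l : ℚ_[p]) * (-1) ^ l / (1 + q⁻¹ ^ (l + 1)))
          + q ^ 2 * (1 + q⁻¹) * (q⁻¹ * (1 - q⁻¹) ^ n)) := by rw [hS, hS3]
      _ = q ^ 2 * ((1 + q⁻¹) * c * ∑ l ∈ range (n + 1),
            (n.choose l : ℚ_[p]) * (-1) ^ l / (1 + q⁻¹ ^ (l + 1)))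
          + q ^ 2 * (1 + q⁻¹) * q⁻¹ * (c * (1 - q⁻¹) ^ n) := by ring
      _ = q ^ 2 * xi q⁻¹ n 0 + q ^ 2 * (1 + q⁻¹) * q⁻¹ * 1 := by rw [hval2, hcmul]
      _ = (1 + q) + q ^ 2 * xi q⁻¹ n 0 := by
            field_simp [hq0]
            ring
  have hI₁ : fermionicIntegral p q (fun x => (qnum q⁻¹ (1 - x)) ^ n)
      ((1 + q) + q ^ 2 * xi q⁻¹ n 0) := by
    unfold fermionicIntegral
    rw [← hval1]
    exact Tendsto.congr (fun N => (hpt1 N).symm) H₁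
  exact ⟨(1 + q) + q ^ 2 * xi q⁻¹ n 0, xi q⁻¹ n 0, hI₁, hI₂, by ring, rfl⟩
end

section
/- (Corollary 7, first part) For all n, k ∈ ℕ with n > k ≥ 1, Σ_{l=0}^{n−k} C(n−k,l)·(−1)^l·ξ_{k+l,q} = q²·Σ_{l=0}^{k} C(k,l)·(−1)^{k+l}·ξ_{n−l,1/q}, where ξ_{m,1/q} denotes the q-Euler number with parameter 1/q in place of q. -/
open Finset Filter

namespace Stmt9Aux

open Polynomial

variable {p : ℕ} [Fact p.Prime]

noncomputable def Ffun (q : ℚ_[p]) (j : ℕ) : ℚ_[p] := (1 + q) / (1 + q ^ (j + 1))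

noncomputable def Mfun (q : ℚ_[p]) : Polynomial ℚ_[p] →ₗ[ℚ_[p]] ℚ_[p] :=
  Polynomial.lsum fun j => LinearMap.toSpanSingleton ℚ_[p] ℚ_[p] (Ffun q j)

lemma Mfun_monomial (q : ℚ_[p]) (j : ℕ) (c : ℚ_[p]) :
    Mfun q (Polynomial.monomial j c) = c * Ffun q j := by
  rw [Mfun, Polynomial.lsum_apply, Polynomial.sum_monomial_index]
  · rw [LinearMap.toSpanSingleton_apply, smul_eq_mul]
  · simp

lemma Mfun_C_mul_X_pow (q : ℚ_[p]) (j : ℕ) (c : ℚ_[p]) :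
    Mfun q (C c * X ^ j) = c * Ffun q j := by
  rw [C_mul_X_pow_eq_monomial, Mfun_monomial]

lemma Mfun_C_mul (q : ℚ_[p]) (c : ℚ_[p]) (P : ℚ_[p][X]) :
    Mfun q (C c * P) = c * Mfun q P := by
  rw [← smul_eq_C_mul, map_smul, smul_eq_mul]

lemma Mfun_comp (q : ℚ_[p]) (hq0 : q ≠ 0) (hden : ∀ j : ℕ, 1 + q ^ (j + 1) ≠ 0)
    (P : ℚ_[p][X]) :
    Mfun q (P.comp (C q * X)) = ((1 + q) * P.eval 1 - Mfun q P) / q := by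
  induction P using Polynomial.induction_on' with
  | add P Q hP hQ =>
    rw [add_comp, map_add, hP, hQ, map_add, eval_add]
    field_simp
    ring
  | monomial j c =>
    have hcomp : ((Polynomial.monomial j c).comp (C q * X)) = C (c * q ^ j) * X ^ j := by
      rw [monomial_comp, mul_pow, ← C_pow, ← mul_assoc, ← C_mul]
    rw [hcomp, Mfun_C_mul_X_pow, Mfun_monomial, eval_monomial, one_pow, mul_one]
    have hF : Ffun q j * (1 + q ^ (j + 1)) = 1 + q := div_mul_cancel₀ _ (hden j)
    rw [eq_div_iff hq0]
    linear_combination c * hF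

lemma Mfun_one_sub_X_pow (q : ℚ_[p]) (a : ℕ) :
    Mfun q ((1 - X) ^ a) = ∑ j ∈ range (a + 1), (a.choose j : ℚ_[p]) * (-1) ^ j * Ffun q j := by
  have h : ((1 : ℚ_[p][X]) - X) ^ a
      = ∑ j ∈ range (a + 1), C ((a.choose j : ℚ_[p]) * (-1) ^ j) * X ^ j := by
    have h0 : ((1 : ℚ_[p][X]) - X) = (-X) + 1 := by ring
    rw [h0, add_pow]
    refine Finset.sum_congr rfl fun j hj => ?_
    rw [neg_pow]
    simp only [map_mul, C_pow, map_neg, map_one, map_natCast, one_pow, mul_one]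
    ring
  rw [h, map_sum]
  refine Finset.sum_congr rfl fun j hj => ?_
  rw [Mfun_C_mul_X_pow]

lemma xi_zero_eq (q : ℚ_[p]) (a : ℕ) :
    xi q a 0 = ((1 - q) ^ a)⁻¹ * ∑ j ∈ range (a + 1), (a.choose j : ℚ_[p]) * (-1) ^ j * Ffun q j := by
  rw [xi, Finset.mul_sum, Finset.mul_sum]
  refine Finset.sum_congr rfl fun j hj => ?_
  rw [mul_zero, zpow_zero, Ffun]
  ring

lemma xi_inv (q : ℚ_[p]) (hq0 : q ≠ 0) (h1q : (1 : ℚ_[p]) - q ≠ 0)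
    (hden : ∀ j : ℕ, 1 + q ^ (j + 1) ≠ 0) (a : ℕ) (ha : 1 ≤ a) :
    xi q⁻¹ a 0 = (-1) ^ (a + 1) * q ^ (a - 1) * xi q a 0 := by
  have h1pq : (1 : ℚ_[p]) + q ≠ 0 := by simpa using hden 0
  have key : ∀ t : ℚ_[p], t ≠ 0 → 1 + t ≠ 0 → (1 + t⁻¹)⁻¹ = 1 - (1 + t)⁻¹ := by
    intro t ht hdt
    have h : 1 + t⁻¹ = (1 + t) * t⁻¹ := by field_simp; ring
    rw [h, mul_inv, inv_inv]
    field_simp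
    ring
  have hFf : ∀ j : ℕ, Ffun q⁻¹ j = (1 + q⁻¹) - (1 + q⁻¹) * (1 + q)⁻¹ * Ffun q j := by
    intro j
    have hpow : q ^ (j + 1) ≠ 0 := pow_ne_zero _ hq0
    rw [Ffun, Ffun, inv_pow, div_eq_mul_inv (1 + q⁻¹), key _ hpow (hden j)]
    have hc : (1 + q⁻¹) * (1 + q)⁻¹ * ((1 + q) / (1 + q ^ (j + 1)))
        = (1 + q⁻¹) * (1 + q ^ (j + 1))⁻¹ := by
      rw [div_eq_mul_inv]
      rw [show (1 + q⁻¹) * (1 + q)⁻¹ * ((1 + q) * (1 + q ^ (j + 1))⁻¹)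
          = ((1 + q)⁻¹ * (1 + q)) * ((1 + q⁻¹) * (1 + q ^ (j + 1))⁻¹) from by ring]
      rw [inv_mul_cancel₀ h1pq, one_mul]
    rw [hc]
    ring
  have hz : ∑ j ∈ range (a + 1), (a.choose j : ℚ_[p]) * (-1) ^ j = 0 := by
    have h := Int.alternating_sum_range_choose_of_ne (show a ≠ 0 by omega)
    have h2 : ((∑ m ∈ range (a + 1), (-1) ^ m * (a.choose m : ℤ) : ℤ) : ℚ_[p]) = 0 := by
      rw [h]; simp
    push_cast at h2
    rw [← h2]
    exact Finset.sum_congr rfl fun j hj => by ring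
  rw [xi_zero_eq, xi_zero_eq]
  have hsum : ∑ j ∈ range (a + 1), (a.choose j : ℚ_[p]) * (-1) ^ j * Ffun q⁻¹ j
      = -((1 + q⁻¹) * (1 + q)⁻¹) *
          ∑ j ∈ range (a + 1), (a.choose j : ℚ_[p]) * (-1) ^ j * Ffun q j := by
    calc ∑ j ∈ range (a + 1), (a.choose j : ℚ_[p]) * (-1) ^ j * Ffun q⁻¹ j
        = ∑ j ∈ range (a + 1), (((a.choose j : ℚ_[p]) * (-1) ^ j) * (1 + q⁻¹)
            - ((1 + q⁻¹) * (1 + q)⁻¹) * ((a.choose j : ℚ_[p]) * (-1) ^ j * Ffun q j)) := by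
          refine Finset.sum_congr rfl fun j hj => ?_
          rw [hFf j]; ring
      _ = (∑ j ∈ range (a + 1), (a.choose j : ℚ_[p]) * (-1) ^ j) * (1 + q⁻¹)
            - ((1 + q⁻¹) * (1 + q)⁻¹) *
              ∑ j ∈ range (a + 1), (a.choose j : ℚ_[p]) * (-1) ^ j * Ffun q j := by
          rw [Finset.sum_sub_distrib, ← Finset.sum_mul, ← Finset.mul_sum]
      _ = _ := by rw [hz]; ring
  rw [hsum]
  obtain ⟨b, rfl⟩ : ∃ b, a = b + 1 := ⟨a - 1, by omega⟩
  have hco : ((1 - q⁻¹) ^ (b + 1))⁻¹ * (-((1 + q⁻¹) * (1 + q)⁻¹))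
      = (-1) ^ (b + 1 + 1) * q ^ (b + 1 - 1) * ((1 - q) ^ (b + 1))⁻¹ := by
    have h1 : (1 : ℚ_[p]) - q⁻¹ = -(1 - q) * q⁻¹ := by field_simp; ring
    have h2 : (1 : ℚ_[p]) + q⁻¹ = (1 + q) * q⁻¹ := by field_simp; ring
    have hA : (1 - q⁻¹) ^ (b + 1) = (-1) ^ (b + 1) * (1 - q) ^ (b + 1) * (q ^ (b + 1))⁻¹ := by
      rw [h1, mul_pow, neg_pow, inv_pow]
    have hn : (-1 : ℚ_[p]) ^ (b + 1) * (-1) ^ (b + 1) = 1 := by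
      rw [← pow_add, ← two_mul, pow_mul]; norm_num
    have hx : (1 - q) ^ (b + 1) * ((1 - q) ^ (b + 1))⁻¹ = 1 := mul_inv_cancel₀ (pow_ne_zero _ h1q)
    have hy : (q ^ (b + 1))⁻¹ * q ^ (b + 1) = 1 := inv_mul_cancel₀ (pow_ne_zero _ hq0)
    have hAinv : ((1 - q⁻¹) ^ (b + 1))⁻¹ = (-1) ^ (b + 1) * ((1 - q) ^ (b + 1))⁻¹ * q ^ (b + 1) := by
      refine inv_eq_of_mul_eq_one_right ?_
      rw [hA]
      rw [show (-1 : ℚ_[p]) ^ (b + 1) * (1 - q) ^ (b + 1) * (q ^ (b + 1))⁻¹ *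
          ((-1) ^ (b + 1) * ((1 - q) ^ (b + 1))⁻¹ * q ^ (b + 1))
          = ((-1) ^ (b + 1) * (-1) ^ (b + 1)) * ((1 - q) ^ (b + 1) * ((1 - q) ^ (b + 1))⁻¹) *
            ((q ^ (b + 1))⁻¹ * q ^ (b + 1)) from by ring, hn, hx, hy]
      norm_num
    have hqq : q * q⁻¹ = 1 := mul_inv_cancel₀ hq0
    have hpq : (1 + q) * (1 + q)⁻¹ = 1 := mul_inv_cancel₀ h1pq
    rw [hAinv, h2, Nat.add_sub_cancel]
    linear_combination (-((-1 : ℚ_[p]) ^ (b + 1)) * ((1 - q) ^ (b + 1))⁻¹ * q ^ b * q * q⁻¹) * hpq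
      + (-((-1 : ℚ_[p]) ^ (b + 1)) * ((1 - q) ^ (b + 1))⁻¹ * q ^ b) * hqq
  linear_combination (∑ j ∈ range (b + 1 + 1), ((b + 1).choose j : ℚ_[p]) * (-1) ^ j * Ffun q j) * hco

lemma keyC (q : ℚ_[p]) (hq0 : q ≠ 0) (hden : ∀ j : ℕ, 1 + q ^ (j + 1) ≠ 0)
    (a b : ℕ) (hb : 1 ≤ b) :
    Mfun q ((1 - X) ^ b * (X - C q) ^ a)
      = (-q) ^ (a + 1) * Mfun q ((1 - X) ^ a * (1 - C q * X) ^ b) := by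
  have hx : (X - C q : ℚ_[p][X]) = C (-q) * (1 - C q⁻¹ * X) := by
    rw [mul_sub, mul_one, ← mul_assoc, ← C_mul]
    rw [show -q * q⁻¹ = -1 from by field_simp]
    simp only [map_neg, map_one]
    ring
  set g : ℚ_[p][X] := (1 - C q⁻¹ * X) ^ a * (1 - X) ^ b with hg
  have hgc : g.comp (C q * X) = (1 - X) ^ a * (1 - C q * X) ^ b := by
    rw [hg]
    simp only [mul_comp, pow_comp, sub_comp, one_comp, C_comp, X_comp]
    rw [← mul_assoc, ← C_mul, inv_mul_cancel₀ hq0, map_one, one_mul]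
  have hge : g.eval 1 = 0 := by
    rw [hg]
    simp only [eval_mul, eval_pow, eval_sub, eval_one, eval_X, sub_self]
    rw [zero_pow (show b ≠ 0 by omega), mul_zero]
  have hMg := Mfun_comp q hq0 hden g
  rw [hgc, hge, mul_zero, zero_sub] at hMg
  have hMg' : Mfun q g = -q * Mfun q ((1 - X) ^ a * (1 - C q * X) ^ b) := by
    field_simp at hMg
    linear_combination hMg
  have hpoly : (1 - X : ℚ_[p][X]) ^ b * (X - C q) ^ a = C ((-q) ^ a) * g := by
    rw [hx, mul_pow, ← C_pow, hg]; ring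
  rw [hpoly, Mfun_C_mul, hMg', pow_succ]
  ring

lemma expand1 (q : ℚ_[p]) (a b : ℕ) :
    Mfun q ((1 - X) ^ b * (X - C q) ^ a)
      = ∑ l ∈ range (a + 1),
          ((a.choose l : ℚ_[p]) * (-1) ^ l * (1 - q) ^ (a - l)) * Mfun q ((1 - X) ^ (b + l)) := by
  have hpoly : ((1 - X : ℚ_[p][X])) ^ b * (X - C q) ^ a
      = ∑ l ∈ range (a + 1),
          ((a.choose l : ℚ_[p]) * (-1) ^ l * (1 - q) ^ (a - l)) • ((1 - X) ^ (b + l)) := by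
    have hxy : (X - C q : ℚ_[p][X]) = -(1 - X) + C (1 - q) := by
      rw [map_sub, map_one]; ring
    rw [hxy, add_pow, Finset.mul_sum]
    refine Finset.sum_congr rfl fun l hl => ?_
    rw [smul_eq_C_mul, neg_pow, pow_add]
    simp only [map_mul, C_pow, map_neg, map_one, map_natCast, map_sub]
    ring
  rw [hpoly, map_sum]
  refine Finset.sum_congr rfl fun l hl => ?_
  rw [map_smul, smul_eq_mul]

lemma expand2 (q : ℚ_[p]) (a b : ℕ) :
    Mfun q ((1 - X) ^ a * (1 - C q * X) ^ b)
      = ∑ l ∈ range (b + 1),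
          ((b.choose l : ℚ_[p]) * q ^ l * (1 - q) ^ (b - l)) * Mfun q ((1 - X) ^ (a + l)) := by
  have hpoly : ((1 - X : ℚ_[p][X])) ^ a * (1 - C q * X) ^ b
      = ∑ l ∈ range (b + 1),
          ((b.choose l : ℚ_[p]) * q ^ l * (1 - q) ^ (b - l)) • ((1 - X) ^ (a + l)) := by
    have hxy : (1 - C q * X : ℚ_[p][X]) = C q * (1 - X) + C (1 - q) := by
      rw [map_sub, map_one]; ring
    rw [hxy, add_pow, Finset.mul_sum]
    refine Finset.sum_congr rfl fun l hl => ?_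
    rw [smul_eq_C_mul, mul_pow, pow_add]
    simp only [map_mul, C_pow, map_natCast, map_sub, map_one]
    ring
  rw [hpoly, map_sum]
  refine Finset.sum_congr rfl fun l hl => ?_
  rw [map_smul, smul_eq_mul]

end Stmt9Aux

open Stmt9Aux Polynomial in
theorem stmt9 (p : ℕ) [Fact p.Prime] (hp : Odd p) (q : ℚ_[p]) (hq : ‖1 - q‖ < 1) (hq1 : q ≠ 1) (n k : ℕ) (hk : 1 ≤ k) (hkn : k < n) :
    ∑ l ∈ Finset.range (n - k + 1), ((n - k).choose l : ℚ_[p]) * (-1) ^ l * xi q (k + l) 0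
      = q ^ 2 * ∑ l ∈ Finset.range (k + 1),
          (k.choose l : ℚ_[p]) * (-1) ^ (k + l) * xi q⁻¹ (n - l) 0 := by
  have hq0 : q ≠ 0 := by
    intro h
    rw [h, sub_zero, norm_one] at hq
    exact lt_irrefl 1 hq
  have hqle : ‖q‖ ≤ 1 := by
    have h : q = 1 + -(1 - q) := by ring
    calc ‖q‖ = ‖(1 : ℚ_[p]) + -(1 - q)‖ := by rw [← h]
      _ ≤ max ‖(1 : ℚ_[p])‖ ‖-(1 - q)‖ := Padic.nonarchimedean _ _
      _ ≤ 1 := by rw [norm_neg, norm_one]; exact max_le le_rfl hq.le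
  have hden : ∀ j : ℕ, (1 : ℚ_[p]) + q ^ (j + 1) ≠ 0 := by
    intro j h
    have h2 : (1 : ℚ_[p]) - q ^ (j + 1) = 2 := by linear_combination -h
    have hnorm : ‖(1 : ℚ_[p]) - q ^ (j + 1)‖ < 1 := by
      have e : (1 : ℚ_[p]) - q ^ (j + 1) = (∑ i ∈ range (j + 1), q ^ i) * (1 - q) := by
        linear_combination geom_sum_mul q (j + 1)
      rw [e]
      calc ‖(∑ i ∈ range (j + 1), q ^ i) * (1 - q)‖
          = ‖∑ i ∈ range (j + 1), q ^ i‖ * ‖1 - q‖ := norm_mul _ _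
        _ ≤ 1 * ‖1 - q‖ := by
            refine mul_le_mul_of_nonneg_right ?_ (norm_nonneg _)
            exact IsUltrametricDist.norm_sum_le_of_forall_le_of_nonneg zero_le_one
              fun i _ => by
                rw [norm_pow]
                exact pow_le_one₀ (norm_nonneg q) hqle
        _ < 1 := by rwa [one_mul]
    rw [h2] at hnorm
    rw [show (2 : ℚ_[p]) = ((2 : ℤ) : ℚ_[p]) from by norm_cast] at hnorm
    rw [Padic.norm_intCast_lt_one_iff] at hnorm
    have hdvd : p ∣ 2 := by exact_mod_cast hnorm
    have hple := Nat.le_of_dvd (by norm_num) hdvd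
    have h2le := (Fact.out : p.Prime).two_le
    have hpe : p = 2 := by omega
    rw [hpe] at hp
    exact (by decide : ¬ Odd 2) hp
  have h1q : (1 : ℚ_[p]) - q ≠ 0 := sub_ne_zero.mpr fun h => hq1 h.symm
  obtain ⟨m', rfl⟩ : ∃ m', n = k + (m' + 1) := ⟨n - k - 1, by omega⟩
  have hnk : k + (m' + 1) - k = m' + 1 := by omega
  rw [hnk]
  set E : ℕ → ℚ_[p] := fun a => Mfun q ((1 - X) ^ a) with hE
  have hxiE : ∀ a : ℕ, xi q a 0 = ((1 - q) ^ a)⁻¹ * E a := by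
    intro a
    show xi q a 0 = ((1 - q) ^ a)⁻¹ * Mfun q ((1 - X) ^ a)
    rw [xi_zero_eq, Mfun_one_sub_X_pow]
  have star : ∑ l ∈ range (m' + 1 + 1),
        (((m' + 1).choose l : ℚ_[p]) * (-1) ^ l * (1 - q) ^ (m' + 1 - l)) * E (k + l)
      = (-q) ^ (m' + 1 + 1) * ∑ l ∈ range (k + 1),
          ((k.choose l : ℚ_[p]) * q ^ l * (1 - q) ^ (k - l)) * E (m' + 1 + l) := by
    rw [← expand1 q (m' + 1) k, ← expand2 q (m' + 1) k, keyC q hq0 hden (m' + 1) k hk]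
  have LHSeq : ∑ l ∈ Finset.range (m' + 1 + 1), ((m' + 1).choose l : ℚ_[p]) * (-1) ^ l * xi q (k + l) 0
      = ((1 - q) ^ (k + (m' + 1)))⁻¹ * ∑ l ∈ range (m' + 1 + 1),
          (((m' + 1).choose l : ℚ_[p]) * (-1) ^ l * (1 - q) ^ (m' + 1 - l)) * E (k + l) := by
    rw [Finset.mul_sum]
    refine Finset.sum_congr rfl fun l hl => ?_
    have hl' : l ≤ m' + 1 := by
      have := Finset.mem_range.mp hl; omega
    rw [hxiE]
    rw [show (k + (m' + 1)) = (k + l) + (m' + 1 - l) from by omega, pow_add, mul_inv]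
    have h1 : ((1 - q) ^ (m' + 1 - l)) * ((1 - q) ^ (m' + 1 - l))⁻¹ = 1 :=
      mul_inv_cancel₀ (pow_ne_zero _ h1q)
    linear_combination (-(((m' + 1).choose l : ℚ_[p]) * (-1) ^ l * ((1 - q) ^ (k + l))⁻¹ * E (k + l))) * h1
  have RHSeq : q ^ 2 * ∑ l ∈ Finset.range (k + 1),
        (k.choose l : ℚ_[p]) * (-1) ^ (k + l) * xi q⁻¹ (k + (m' + 1) - l) 0
      = ((1 - q) ^ (k + (m' + 1)))⁻¹ * ((-q) ^ (m' + 1 + 1) * ∑ l ∈ range (k + 1),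
          ((k.choose l : ℚ_[p]) * q ^ l * (1 - q) ^ (k - l)) * E (m' + 1 + l)) := by
    rw [← Finset.sum_range_reflect
      (fun l => (k.choose l : ℚ_[p]) * (-1) ^ (k + l) * xi q⁻¹ (k + (m' + 1) - l) 0) (k + 1)]
    rw [Finset.mul_sum, Finset.mul_sum, Finset.mul_sum]
    refine Finset.sum_congr rfl fun j hj => ?_
    have hj' : j ≤ k := by
      have := Finset.mem_range.mp hj; omega
    rw [show k + 1 - 1 - j = k - j from by omega]
    rw [Nat.choose_symm hj']
    rw [show k + (m' + 1) - (k - j) = m' + 1 + j from by omega]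
    rw [xi_inv q hq0 h1q hden (m' + 1 + j) (by omega)]
    rw [hxiE (m' + 1 + j)]
    rw [show m' + 1 + j - 1 = m' + j from by omega]
    have hsgn : (-1 : ℚ_[p]) ^ (k + (k - j)) = (-1) ^ j := by
      rw [show k + (k - j) = j + 2 * (k - j) from by omega, pow_add, pow_mul]
      norm_num
    rw [hsgn]
    have hsplitinv : ((1 - q) ^ (k + (m' + 1)))⁻¹
        = ((1 - q) ^ (m' + 1 + j))⁻¹ * ((1 - q) ^ (k - j))⁻¹ := by
      rw [← mul_inv, ← pow_add]
      congr 2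
      omega
    rw [hsplitinv, neg_pow]
    have hBB : ((1 - q) ^ (k - j)) * ((1 - q) ^ (k - j))⁻¹ = 1 :=
      mul_inv_cancel₀ (pow_ne_zero _ h1q)
    have hs2 : (-1 : ℚ_[p]) ^ j * (-1) ^ j = 1 := by
      rw [← pow_add, ← two_mul, pow_mul]; norm_num
    linear_combination
      (-((k.choose j : ℚ_[p]) * (-1) ^ m' * q ^ (m' + j + 2) * ((1 - q) ^ (m' + 1 + j))⁻¹ * E (m' + 1 + j))) * hBB
      + ((k.choose j : ℚ_[p]) * (-1) ^ m' * q ^ (m' + j + 2) * ((1 - q) ^ (m' + 1 + j))⁻¹ * E (m' + 1 + j)) * hs2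
  rw [LHSeq, RHSeq, star]
end

section
/- (Corollary 7, second part) For every integer n ≥ 1, Σ_{l=0}^{n} C(n,l)·(−1)^l·ξ_{l,q} = [2]_q + q²·ξ_{n,1/q}, where ξ_{n,1/q} denotes the q-Euler number with parameter 1/q in place of q. -/
open Finset Filter

private lemma binom_transform {R : Type*} [CommRing R] (x y : R) (f : ℕ → R) (n : ℕ) :
    ∑ l ∈ Finset.range (n + 1), (n.choose l : R) * x ^ (n - l) *
        ∑ j ∈ Finset.range (l + 1), (l.choose j : R) * y ^ (l - j) * f j
      = ∑ j ∈ Finset.range (n + 1), (n.choose j : R) * (x + y) ^ (n - j) * f j := by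
  have h1 : ∑ l ∈ Finset.range (n + 1), (n.choose l : R) * x ^ (n - l) *
        ∑ j ∈ Finset.range (l + 1), (l.choose j : R) * y ^ (l - j) * f j
      = ∑ l ∈ Finset.range (n + 1), ∑ j ∈ Finset.range (l + 1),
          (n.choose l : R) * x ^ (n - l) * ((l.choose j : R) * y ^ (l - j) * f j) :=
    Finset.sum_congr rfl fun l _ => Finset.mul_sum _ _ _
  rw [h1]
  have h2 : ∑ l ∈ Finset.range (n + 1), ∑ j ∈ Finset.range (l + 1),
          (n.choose l : R) * x ^ (n - l) * ((l.choose j : R) * y ^ (l - j) * f j)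
      = ∑ j ∈ Finset.range (n + 1), ∑ l ∈ Finset.Ico j (n + 1),
          (n.choose l : R) * x ^ (n - l) * ((l.choose j : R) * y ^ (l - j) * f j) := by
    simp_rw [Finset.range_eq_Ico]
    exact (Finset.sum_Ico_Ico_comm 0 (n + 1)
      (fun j l => (n.choose l : R) * x ^ (n - l) * ((l.choose j : R) * y ^ (l - j) * f j))).symm
  rw [h2]
  refine Finset.sum_congr rfl fun j hj => ?_
  rw [Finset.mem_range] at hj
  have hjn : j ≤ n := Nat.lt_succ_iff.mp hj
  rw [Finset.sum_Ico_eq_sum_range]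
  have hnm : n + 1 - j = (n - j) + 1 := by omega
  rw [hnm]
  have hap : (x + y) ^ (n - j) = ∑ m ∈ Finset.range ((n - j) + 1),
      y ^ m * x ^ (n - j - m) * ((n - j).choose m : R) := by
    rw [add_comm x y]; exact add_pow y x (n - j)
  rw [hap, Finset.mul_sum, Finset.sum_mul]
  refine Finset.sum_congr rfl fun m hm => ?_
  rw [Finset.mem_range] at hm
  have hmn : m ≤ n - j := Nat.lt_succ_iff.mp hm
  have hc : (n.choose (j + m) : R) * ((j + m).choose j : R)
      = (n.choose j : R) * ((n - j).choose m : R) := by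
    rw [← Nat.cast_mul, ← Nat.cast_mul,
      Nat.choose_mul (n := n) (by omega : j ≤ j + m),
      (by omega : j + m - j = m)]
  have he1 : n - (j + m) = n - j - m := by omega
  have he2 : j + m - j = m := by omega
  rw [he1, he2]
  calc (n.choose (j + m) : R) * x ^ (n - j - m) * (((j + m).choose j : R) * y ^ m * f j)
      = ((n.choose (j + m) : R) * ((j + m).choose j : R)) * (x ^ (n - j - m) * y ^ m * f j) := by
        ring
    _ = ((n.choose j : R) * ((n - j).choose m : R)) * (x ^ (n - j - m) * y ^ m * f j) := by
        rw [hc]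
    _ = (n.choose j : R) * (y ^ m * x ^ (n - j - m) * ((n - j).choose m : R)) * f j := by ring

private lemma xi_zero {p : ℕ} [Fact p.Prime] (q : ℚ_[p]) (m : ℕ) :
    xi q m 0 = ((1 + q) / (1 - q) ^ m) *
      ∑ j ∈ Finset.range (m + 1), (m.choose j : ℚ_[p]) * (-1) ^ j * (1 + q ^ (j + 1))⁻¹ := by
  unfold xi
  congr 1
  refine Finset.sum_congr rfl fun j _ => ?_
  rw [mul_zero, zpow_zero, mul_one, div_eq_mul_inv]

theorem stmt10 (p : ℕ) [Fact p.Prime] (hp : Odd p) (q : ℚ_[p]) (hq : ‖1 - q‖ < 1) (hq1 : q ≠ 1) (n : ℕ) (hn : 1 ≤ n) :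
    ∑ l ∈ Finset.range (n + 1), (n.choose l : ℚ_[p]) * (-1) ^ l * xi q l 0
      = (1 + q) + q ^ 2 * xi q⁻¹ n 0 := by
  -- basic nonvanishing facts
  have hc : (1 : ℚ_[p]) - q ≠ 0 := sub_ne_zero.mpr (Ne.symm hq1)
  have hnq : ‖q‖ = 1 := by
    have h1 : q = 1 + (-(1 - q)) := by ring
    rw [h1, Padic.add_eq_max_of_ne]
    · simp only [norm_one, norm_neg]
      exact max_eq_left hq.le
    · simp only [norm_one, norm_neg]
      exact ne_of_gt hq
  have hq0 : q ≠ 0 := fun h => by simp [h] at hnq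
  have hpowlt : ∀ m : ℕ, ‖q ^ m - 1‖ < 1 := by
    intro m
    induction m with
    | zero => simpa using one_pos
    | succ m ih =>
      have hsplit : q ^ (m + 1) - 1 = q ^ m * (q - 1) + (q ^ m - 1) := by ring
      rw [hsplit]
      refine lt_of_le_of_lt (Padic.nonarchimedean _ _) (max_lt ?_ ih)
      rw [norm_mul, norm_pow, hnq, one_pow, one_mul, norm_sub_rev]
      exact hq
  have h2norm : ‖(2 : ℚ_[p])‖ = 1 := by
    have hle : ‖((2 : ℤ) : ℚ_[p])‖ ≤ 1 := Padic.norm_int_le_one 2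
    have hnlt : ¬ ‖((2 : ℤ) : ℚ_[p])‖ < 1 := by
      rw [Padic.norm_intCast_lt_one_iff]
      intro hdvd
      have hp2 : p ∣ 2 := by exact_mod_cast hdvd
      have := (Nat.prime_dvd_prime_iff_eq (Fact.out : p.Prime) Nat.prime_two).mp hp2
      rw [this] at hp
      exact (Nat.not_odd_iff_even.mpr even_two) hp
    have h22 : ‖((2 : ℤ) : ℚ_[p])‖ = 1 := le_antisymm hle (not_lt.mp hnlt)
    simpa using h22
  have hd : ∀ m : ℕ, (1 : ℚ_[p]) + q ^ (m + 1) ≠ 0 := by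
    intro m h0
    have hnorm : ‖(1 : ℚ_[p]) + q ^ (m + 1)‖ = 1 := by
      rw [show (1 : ℚ_[p]) + q ^ (m + 1) = 2 + (q ^ (m + 1) - 1) by ring,
        Padic.add_eq_max_of_ne]
      · rw [h2norm]
        exact max_eq_left (hpowlt (m + 1)).le
      · rw [h2norm]
        exact ne_of_gt (hpowlt (m + 1))
    rw [h0] at hnorm
    simp at hnorm
  have hq1' : (1 : ℚ_[p]) + q ≠ 0 := by
    have := hd 0
    rwa [pow_one] at this
  have hcn : ((1 : ℚ_[p]) - q) ^ n ≠ 0 := pow_ne_zero _ hc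
  apply mul_left_cancel₀ hcn
  -- LHS computation
  have L1 : (1 - q) ^ n * ∑ l ∈ Finset.range (n + 1), (n.choose l : ℚ_[p]) * (-1) ^ l * xi q l 0
      = ((-1) ^ n * (1 + q)) * ∑ l ∈ Finset.range (n + 1),
          (n.choose l : ℚ_[p]) * (q - 1) ^ (n - l) *
          ∑ j ∈ Finset.range (l + 1),
            (l.choose j : ℚ_[p]) * (1 : ℚ_[p]) ^ (l - j) * ((-1) ^ j * (1 + q ^ (j + 1))⁻¹) := by
    rw [Finset.mul_sum, Finset.mul_sum]
    refine Finset.sum_congr rfl fun l hl => ?_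
    rw [Finset.mem_range] at hl
    have hln : l ≤ n := Nat.lt_succ_iff.mp hl
    rw [xi_zero]
    have hin : ∑ j ∈ Finset.range (l + 1),
          (l.choose j : ℚ_[p]) * (1 : ℚ_[p]) ^ (l - j) * ((-1) ^ j * (1 + q ^ (j + 1))⁻¹)
        = ∑ j ∈ Finset.range (l + 1), (l.choose j : ℚ_[p]) * (-1) ^ j * (1 + q ^ (j + 1))⁻¹ := by
      refine Finset.sum_congr rfl fun j _ => ?_
      rw [one_pow]
      ring
    rw [hin]
    have e1 : ((1 : ℚ_[p]) - q) ^ n = ((-1) ^ (n - l) * (q - 1) ^ (n - l)) * (1 - q) ^ l := by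
      have ee : ((1 : ℚ_[p]) - q) ^ (n - l) = (-1) ^ (n - l) * (q - 1) ^ (n - l) := by
        rw [show (1 : ℚ_[p]) - q = -(q - 1) by ring, neg_pow]
      rw [← ee, ← pow_add]
      congr 1
      omega
    have e2 : ((-1 : ℚ_[p])) ^ n = (-1) ^ (n - l) * (-1) ^ l := by
      rw [← pow_add]
      congr 1
      omega
    have hl0 : ((1 : ℚ_[p]) - q) ^ l ≠ 0 := pow_ne_zero _ hc
    rw [e1, e2, div_eq_mul_inv]
    field_simp
  have B := binom_transform (q - 1) 1 (fun j => (-1) ^ j * (1 + q ^ (j + 1))⁻¹) n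
  simp only [show q - 1 + 1 = q by ring] at B
  rw [L1, B]
  -- RHS computation
  have hXi : xi q⁻¹ n 0 = ((1 + q⁻¹) / (1 - q⁻¹) ^ n) *
      ∑ j ∈ Finset.range (n + 1), (n.choose j : ℚ_[p]) * (-1) ^ j * (q ^ (j + 1) * (1 + q ^ (j + 1))⁻¹) := by
    rw [xi_zero]
    congr 1
    refine Finset.sum_congr rfl fun j _ => ?_
    have hpj : (q : ℚ_[p]) ^ (j + 1) ≠ 0 := pow_ne_zero _ hq0
    have h0 : (1 : ℚ_[p]) + q⁻¹ ^ (j + 1) = (1 + q ^ (j + 1)) / q ^ (j + 1) := by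
      rw [inv_pow, add_div, div_self hpj, one_div]
      ring
    have h1 : ((1 : ℚ_[p]) + q⁻¹ ^ (j + 1))⁻¹ = q ^ (j + 1) * (1 + q ^ (j + 1))⁻¹ := by
      rw [h0, inv_div, div_eq_mul_inv]
    rw [h1]
  have hscal : (1 - q) ^ n * (q ^ 2 * ((1 + q⁻¹) / (1 - q⁻¹) ^ n))
      = (-1) ^ n * (1 + q) * q ^ (n + 1) := by
    have hq1n : (q - 1 : ℚ_[p]) ≠ 0 := sub_ne_zero.mpr hq1
    have hiq : (1 : ℚ_[p]) - q⁻¹ = (q - 1) / q := by field_simp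
    have hiq2 : (1 : ℚ_[p]) + q⁻¹ = (1 + q) / q := by
      field_simp
      ring
    have e1 : ((1 : ℚ_[p]) - q) ^ n = (-1) ^ n * (q - 1) ^ n := by
      rw [show (1 : ℚ_[p]) - q = -(q - 1) by ring, neg_pow]
    rw [hiq, hiq2, e1, div_pow]
    field_simp
    ring
  -- key combinatorial identity
  have s1 : ∑ j ∈ Finset.range (n + 1), (-1 : ℚ_[p]) ^ j * q ^ (n - j) * (n.choose j : ℚ_[p])
      = (-1) ^ n * (1 - q) ^ n := by
    have h : ((-1 : ℚ_[p]) + q) ^ n = (-1) ^ n * (1 - q) ^ n := by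
      rw [← mul_pow]
      congr 1
      ring
    rw [← h]
    exact (add_pow (-1 : ℚ_[p]) q n).symm
  have s2 : ∑ j ∈ Finset.range (n + 1), (-1 : ℚ_[p]) ^ j * (1 : ℚ_[p]) ^ (n - j) * (n.choose j : ℚ_[p])
      = 0 := by
    have h := (add_pow (-1 : ℚ_[p]) 1 n).symm
    rw [h]
    rw [show (-1 : ℚ_[p]) + 1 = 0 by ring]
    exact zero_pow (by omega)
  have key : ∑ j ∈ Finset.range (n + 1),
        (n.choose j : ℚ_[p]) * q ^ (n - j) * ((-1) ^ j * (1 + q ^ (j + 1))⁻¹)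
      = (-1) ^ n * (1 - q) ^ n
        + q ^ (n + 1) * ∑ j ∈ Finset.range (n + 1),
            (n.choose j : ℚ_[p]) * (-1) ^ j * (q ^ (j + 1) * (1 + q ^ (j + 1))⁻¹) := by
    rw [← sub_eq_iff_eq_add]
    calc ∑ j ∈ Finset.range (n + 1),
          (n.choose j : ℚ_[p]) * q ^ (n - j) * ((-1) ^ j * (1 + q ^ (j + 1))⁻¹)
        - q ^ (n + 1) * ∑ j ∈ Finset.range (n + 1),
            (n.choose j : ℚ_[p]) * (-1) ^ j * (q ^ (j + 1) * (1 + q ^ (j + 1))⁻¹)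
        = ∑ j ∈ Finset.range (n + 1),
            ((-1 : ℚ_[p]) ^ j * q ^ (n - j) * (n.choose j : ℚ_[p])
              - q ^ (n + 1) * ((-1) ^ j * (1 : ℚ_[p]) ^ (n - j) * (n.choose j : ℚ_[p]))) := by
          rw [Finset.mul_sum, ← Finset.sum_sub_distrib]
          refine Finset.sum_congr rfl fun j hj => ?_
          rw [Finset.mem_range] at hj
          have hjn : j ≤ n := Nat.lt_succ_iff.mp hj
          have hpj : q ^ (n - j) * q ^ (j + 1) = q ^ (n + 1) := by
            rw [← pow_add]
            congr 1
            omega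
          have haj : (1 + q ^ (j + 1)) * (1 + q ^ (j + 1))⁻¹ = 1 := mul_inv_cancel₀ (hd j)
          linear_combination ((n.choose j : ℚ_[p]) * (-1) ^ j) *
            ((q ^ (n - j) - q ^ (n + 1)) * haj - (1 + q ^ (j + 1))⁻¹ * hpj)
      _ = (∑ j ∈ Finset.range (n + 1), (-1 : ℚ_[p]) ^ j * q ^ (n - j) * (n.choose j : ℚ_[p]))
            - q ^ (n + 1) * ∑ j ∈ Finset.range (n + 1),
                (-1 : ℚ_[p]) ^ j * (1 : ℚ_[p]) ^ (n - j) * (n.choose j : ℚ_[p]) := by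
          rw [Finset.sum_sub_distrib, ← Finset.mul_sum]
      _ = (-1) ^ n * (1 - q) ^ n := by rw [s1, s2, mul_zero, sub_zero]
  rw [hXi]
  have hsq : ((-1 : ℚ_[p]) ^ n) * ((-1) ^ n) = 1 := by
    rw [← mul_pow]
    norm_num
  linear_combination ((-1 : ℚ_[p]) ^ n * (1 + q)) * key
    - (∑ j ∈ Finset.range (n + 1),
        (n.choose j : ℚ_[p]) * (-1) ^ j * (q ^ (j + 1) * (1 + q ^ (j + 1))⁻¹)) * hscal
    + ((1 + q) * (1 - q) ^ n) * hsq
end
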